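/- arXiv:2301.07090 — 2 statements merged into one kernel-verified Lean document; each statement's English description precedes it below -/
import Mathlib

section
/- Let n ≥ 2, 1 ≤ k ≤ n−1, and let λ : {1,…,n} → Bool be a word taking the value true at exactly k positions. Then there is exactly one cup diagram M that is oriented for λ and admissible for λ with |M| = min(k, n−k) if and only if either (k ≤ n−k and the set {i : λ(i) = false} consists of consecutive integers) or (n−k ≤ k and the set {i : λ(i) = true} consists of consecutive integers). -/
set_option maxHeartbeats 1000000


/-- A cup diagram on `{0,…,n-1}`: a finite set `M` of pairs `(i,j)` with `i < j`,
with pairwise disjoint endpoints, non-crossing, and such that every position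
strictly between the endpoints of a cup is itself an endpoint of some cup. -/
def IsCupDiagram {n : ℕ} (M : Finset (Fin n × Fin n)) : Prop :=
  (∀ p ∈ M, p.1 < p.2) ∧
  (∀ p ∈ M, ∀ q ∈ M, p ≠ q →
    p.1 ≠ q.1 ∧ p.1 ≠ q.2 ∧ p.2 ≠ q.1 ∧ p.2 ≠ q.2) ∧
  (∀ p ∈ M, ∀ q ∈ M, ¬(p.1 < q.1 ∧ q.1 < p.2 ∧ p.2 < q.2)) ∧
  (∀ p ∈ M, ∀ l : Fin n, p.1 < l → l < p.2 → ∃ q ∈ M, l = q.1 ∨ l = q.2)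

/-- A position is free if it is not an endpoint of any pair of `M`. -/
def IsFree {n : ℕ} (M : Finset (Fin n × Fin n)) (l : Fin n) : Prop :=
  ∀ p ∈ M, p.1 ≠ l ∧ p.2 ≠ l

/-- `M` is oriented for the word `λ` if the two endpoints of each cup carry
different letters. -/
def OrientedFor {n : ℕ} (lam : Fin n → Bool) (M : Finset (Fin n × Fin n)) : Prop :=
  ∀ p ∈ M, lam p.1 ≠ lam p.2

/-- The degree of `M` for `λ`: the number of cups `(i,j)` with `λ(i) = true`
(clockwise cups). -/
def cupDegree {n : ℕ} (lam : Fin n → Bool) (M : Finset (Fin n × Fin n)) : ℕ :=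
  (M.filter (fun p => lam p.1 = true)).card

/-- `M` is admissible for `λ` if there are no free positions `i < j` with
`λ(i) = false` (`∨`) and `λ(j) = true` (`∧`). -/
def AdmissibleFor {n : ℕ} (lam : Fin n → Bool) (M : Finset (Fin n × Fin n)) : Prop :=
  ∀ i j : Fin n, i < j → IsFree M i → IsFree M j → ¬(lam i = false ∧ lam j = true)

namespace CupProof
variable {n : ℕ}
attribute [local instance] Classical.propDecidable
def Endpt (M : Finset (Fin n × Fin n)) (l : Fin n) : Prop := ∃ c ∈ M, l = c.1 ∨ l = c.2
lemma not_free_iff {M : Finset (Fin n × Fin n)} {l : Fin n} :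
    ¬ IsFree M l ↔ Endpt M l := by
  unfold IsFree Endpt; push_neg
  constructor
  · rintro ⟨p, hp, h⟩; exact ⟨p, hp, by tauto⟩
  · rintro ⟨p, hp, h⟩; exact ⟨p, hp, by tauto⟩
lemma eq_of_shared {M : Finset (Fin n × Fin n)} (hM : IsCupDiagram M)
    {p q : Fin n × Fin n} (hp : p ∈ M) (hq : q ∈ M)
    (h : p.1 = q.1 ∨ p.1 = q.2 ∨ p.2 = q.1 ∨ p.2 = q.2) : p = q := by
  by_contra hne
  have := hM.2.1 p hp q hq hne
  tauto
lemma straddle {M : Finset (Fin n × Fin n)} (hM : IsCupDiagram M)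
    {p q : Fin n × Fin n} (hp : p ∈ M) (hq : q ∈ M) {l : Fin n}
    (hl : l = q.1 ∨ l = q.2) (h1 : p.1 < l) (h2 : l < p.2) :
    p.1 < q.1 ∧ q.2 < p.2 := by
  have hpq : p ≠ q := by
    rintro rfl
    rcases hl with rfl | rfl
    · exact absurd h1 (lt_irrefl _)
    · exact absurd h2 (lt_irrefl _)
  have hd := hM.2.1 p hp q hq hpq
  have hqlt := hM.1 q hq
  have hplt := hM.1 p hp
  have hnc1 := hM.2.2.1 p hp q hq
  have hnc2 := hM.2.2.1 q hq p hp
  rcases hl with rfl | rfl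
  · refine ⟨h1, ?_⟩
    rcases lt_trichotomy q.2 p.2 with h | h | h
    · exact h
    · exact absurd h.symm hd.2.2.2
    · exact absurd ⟨h1, h2, h⟩ hnc1
  · constructor
    · rcases lt_trichotomy p.1 q.1 with h | h | h
      · exact h
      · exact absurd h hd.1
      · exact absurd ⟨h, h1, h2⟩ hnc2
    · exact h2
lemma fill_inside {M : Finset (Fin n × Fin n)} (hM : IsCupDiagram M)
    {p : Fin n × Fin n} (hp : p ∈ M) {l : Fin n} (h1 : p.1 < l) (h2 : l < p.2) :
    ∃ q ∈ M, (l = q.1 ∨ l = q.2) ∧ p.1 < q.1 ∧ q.2 < p.2 := by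
  obtain ⟨q, hq, hl⟩ := hM.2.2.2 p hp l h1 h2
  exact ⟨q, hq, hl, straddle hM hp hq hl h1 h2⟩
attribute [local instance] Classical.propDecidable

/-- the L-colored endpoint of a cup -/
lemma card_matched_eq {lam : Fin n → Bool} {M : Finset (Fin n × Fin n)}
    (hM : IsCupDiagram M) (hOr : OrientedFor lam M) (L : Bool) :
    (Finset.univ.filter fun l : Fin n => lam l = L ∧ Endpt M l).card = M.card := by
  symm
  apply Finset.card_bij (fun p _ => if lam p.1 = L then p.1 else p.2)
  · intro p hp
    simp only [Finset.mem_filter, Finset.mem_univ, true_and]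
    have := hOr p hp
    by_cases h : lam p.1 = L
    · rw [if_pos h]; exact ⟨h, p, hp, Or.inl rfl⟩
    · rw [if_neg h]
      refine ⟨?_, p, hp, Or.inr rfl⟩
      cases hL : lam p.2 <;> cases L <;> simp_all
  · intro p hp q hq heq
    apply eq_of_shared hM hp hq
    split_ifs at heq <;> tauto
  · rintro l hl
    simp only [Finset.mem_filter, Finset.mem_univ, true_and] at hl
    obtain ⟨hlL, c, hc, hend⟩ := hl
    refine ⟨c, hc, ?_⟩
    have := hOr c hc
    rcases hend with rfl | rfl
    · rw [if_pos hlL]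
    · have : lam c.1 ≠ L := by rw [hlL] at this; exact this
      rw [if_neg this]

lemma all_matched {lam : Fin n → Bool} {M : Finset (Fin n × Fin n)}
    (hM : IsCupDiagram M) (hOr : OrientedFor lam M) (L : Bool)
    (hcard : M.card = (Finset.univ.filter fun l : Fin n => lam l = L).card) :
    ∀ l : Fin n, lam l = L → Endpt M l := by
  have h1 := card_matched_eq hM hOr L
  have hsub : (Finset.univ.filter fun l : Fin n => lam l = L ∧ Endpt M l) ⊆
      (Finset.univ.filter fun l : Fin n => lam l = L) := by
    intro x hx; simp only [Finset.mem_filter] at *; tauto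
  have := Finset.eq_of_subset_of_card_le hsub (by omega)
  intro l hl
  have : l ∈ (Finset.univ.filter fun l : Fin n => lam l = L ∧ Endpt M l) := by
    rw [this]; simp [hl]
  simp only [Finset.mem_filter] at this; tauto

lemma exists_free {lam : Fin n → Bool} {M : Finset (Fin n × Fin n)}
    (hM : IsCupDiagram M) (hOr : OrientedFor lam M) (L : Bool)
    (hcard : M.card < (Finset.univ.filter fun l : Fin n => lam l = L).card) :
    ∃ g : Fin n, lam g = L ∧ ¬ Endpt M g := by
  have h1 := card_matched_eq hM hOr L
  by_contra h
  push_neg at h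
  have hsub : (Finset.univ.filter fun l : Fin n => lam l = L) ⊆
      (Finset.univ.filter fun l : Fin n => lam l = L ∧ Endpt M l) := by
    intro x hx; simp only [Finset.mem_filter, Finset.mem_univ, true_and] at *
    exact ⟨hx, h x hx⟩
  have := Finset.card_le_card hsub
  omega

noncomputable def mate (M : Finset (Fin n × Fin n)) (l : Fin n) : Fin n :=
  if h : Endpt M l then (if l = h.choose.1 then h.choose.2 else h.choose.1) else l

lemma mate_fst {M : Finset (Fin n × Fin n)} (hM : IsCupDiagram M)
    {c : Fin n × Fin n} (hc : c ∈ M) : mate M c.1 = c.2 := by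
  have h : Endpt M c.1 := ⟨c, hc, Or.inl rfl⟩
  have hs := h.choose_spec
  have : c = h.choose := eq_of_shared hM hc hs.1 (by tauto)
  unfold mate
  rw [dif_pos h, ← this, if_pos rfl]

lemma mate_snd {M : Finset (Fin n × Fin n)} (hM : IsCupDiagram M)
    {c : Fin n × Fin n} (hc : c ∈ M) : mate M c.2 = c.1 := by
  have h : Endpt M c.2 := ⟨c, hc, Or.inr rfl⟩
  have hs := h.choose_spec
  have hthis : c = h.choose := eq_of_shared hM hc hs.1 (by tauto)
  have hne : c.2 ≠ c.1 := (hM.1 c hc).ne'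
  unfold mate
  rw [dif_pos h, ← hthis, if_neg hne]

lemma cup_of_mem_closed {M : Finset (Fin n × Fin n)} (hM : IsCupDiagram M)
    {c : Fin n × Fin n} (hc : c ∈ M) {l : Fin n} (h1 : c.1 ≤ l) (h2 : l ≤ c.2) :
    ∃ e ∈ M, (l = e.1 ∨ l = e.2) ∧ c.1 ≤ e.1 ∧ e.2 ≤ c.2 := by
  rcases eq_or_lt_of_le h1 with rfl | h1'
  · exact ⟨c, hc, Or.inl rfl, le_refl _, le_refl _⟩
  rcases eq_or_lt_of_le h2 with rfl | h2'
  · exact ⟨c, hc, Or.inr rfl, le_refl _, le_refl _⟩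
  obtain ⟨e, he, hl, hb1, hb2⟩ := fill_inside hM hc h1' h2'
  exact ⟨e, he, hl, le_of_lt hb1, le_of_lt hb2⟩

lemma mate_good {lam : Fin n → Bool} {M : Finset (Fin n × Fin n)}
    (hM : IsCupDiagram M) (hOr : OrientedFor lam M)
    {c : Fin n × Fin n} (hc : c ∈ M) {l : Fin n} (h1 : c.1 ≤ l) (h2 : l ≤ c.2) :
    c.1 ≤ mate M l ∧ mate M l ≤ c.2 ∧ lam (mate M l) ≠ lam l ∧ mate M (mate M l) = l := by
  obtain ⟨e, he, hl, hb1, hb2⟩ := cup_of_mem_closed hM hc h1 h2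
  have hor := hOr e he
  have helt := hM.1 e he
  rcases hl with rfl | rfl
  · rw [mate_fst hM he]
    exact ⟨le_trans hb1 (le_of_lt helt), hb2, hor.symm, mate_snd hM he⟩
  · rw [mate_snd hM he]
    exact ⟨hb1, le_trans (le_of_lt helt) hb2, hor, mate_fst hM he⟩

lemma balance {lam : Fin n → Bool} {M : Finset (Fin n × Fin n)}
    (hM : IsCupDiagram M) (hOr : OrientedFor lam M)
    {c : Fin n × Fin n} (hc : c ∈ M) (L : Bool) :
    (Finset.univ.filter fun l : Fin n => c.1 ≤ l ∧ l ≤ c.2 ∧ lam l = L).card =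
    (Finset.univ.filter fun l : Fin n => c.1 ≤ l ∧ l ≤ c.2 ∧ lam l = !L).card := by
  apply Finset.card_bij (fun l _ => mate M l)
  · intro l hl
    simp only [Finset.mem_filter, Finset.mem_univ, true_and] at *
    obtain ⟨g1, g2, g3, g4⟩ := mate_good hM hOr hc hl.1 hl.2.1
    refine ⟨g1, g2, ?_⟩
    rw [hl.2.2] at g3
    cases L <;> simp_all
  · intro a ha b hb heq
    simp only [Finset.mem_filter, Finset.mem_univ, true_and] at *
    have g4a := (mate_good hM hOr hc ha.1 ha.2.1).2.2.2
    have g4b := (mate_good hM hOr hc hb.1 hb.2.1).2.2.2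
    rw [← g4a, heq, g4b]
  · intro b hb
    simp only [Finset.mem_filter, Finset.mem_univ, true_and] at *
    obtain ⟨g1, g2, g3, g4⟩ := mate_good hM hOr hc hb.1 hb.2.1
    refine ⟨mate M b, ⟨g1, g2, ?_⟩, g4⟩
    rw [hb.2.2] at g3
    cases L <;> simp_all

lemma card_val_interval (x y : ℕ) (h : y ≤ n) :
    (Finset.univ.filter fun l : Fin n => x ≤ l.val ∧ l.val < y).card = y - x := by
  rcases le_or_gt y x with hxy | hxy
  · rw [Nat.sub_eq_zero_of_le hxy, Finset.card_eq_zero, Finset.eq_empty_iff_forall_notMem]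
    intro l hl
    simp only [Finset.mem_filter] at hl
    omega
  rw [show y - x = (Finset.range (y - x)).card from (Finset.card_range _).symm]
  apply Finset.card_bij (fun l _ => l.val - x)
  · intro l hl
    simp only [Finset.mem_filter, Finset.mem_range] at *
    omega
  · intro a ha b hb heq
    simp only [Finset.mem_filter, Finset.mem_univ, true_and] at *
    have : a.val = b.val := by omega
    exact Fin.ext this
  · intro b hb
    simp only [Finset.mem_range] at hb
    refine ⟨⟨x + b, by omega⟩, ?_, by simp⟩
    simp only [Finset.mem_filter, Finset.mem_univ, true_and]
    omega



/-! ### Surgery lemmas -/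

/-- interval (b,c) is matched within (b,c) -/
def W (M : Finset (Fin n × Fin n)) (b c : Fin n) : Prop :=
  ∀ l : Fin n, b < l → l < c → ∃ e ∈ M, (l = e.1 ∨ l = e.2) ∧ b < e.1 ∧ e.2 < c

section Surgery

variable {lam : Fin n → Bool} {M : Finset (Fin n × Fin n)}

lemma sepOut (hM : IsCupDiagram M)
    {a b c d : Fin n} (hab : (a, b) ∈ M) (hcd : (c, d) ∈ M) (hbc : b < c)
    (hW : W M b c) :
    ∀ e ∈ M, e ≠ (a, b) → e ≠ (c, d) →
      (e.2 < a) ∨ (a < e.1 ∧ e.2 < b) ∨ (b < e.1 ∧ e.2 < c) ∨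
      (c < e.1 ∧ e.2 < d) ∨ (d < e.1) ∨ (e.1 < a ∧ d < e.2) := by
  intro e he hne1 hne2
  have hd1 := hM.2.1 e he _ hab hne1
  have hd2 := hM.2.1 e he _ hcd hne2
  have helt := hM.1 e he
  have hab' := hM.1 _ hab
  have hcd' := hM.1 _ hcd
  have A1 : a < e.1 → e.1 < b → a < e.1 ∧ e.2 < b := fun h1 h2 =>
    straddle hM hab he (Or.inl rfl) h1 h2
  have A2 : a < e.2 → e.2 < b → a < e.1 ∧ e.2 < b := fun h1 h2 =>
    straddle hM hab he (Or.inr rfl) h1 h2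
  have C1 : c < e.1 → e.1 < d → c < e.1 ∧ e.2 < d := fun h1 h2 =>
    straddle hM hcd he (Or.inl rfl) h1 h2
  have C2 : c < e.2 → e.2 < d → c < e.1 ∧ e.2 < d := fun h1 h2 =>
    straddle hM hcd he (Or.inr rfl) h1 h2
  have B0 : ∀ l : Fin n, (l = e.1 ∨ l = e.2) → b < l → l < c → b < e.1 ∧ e.2 < c := by
    intro l hl h1 h2
    obtain ⟨q, hq, hlq, hb1, hb2⟩ := hW l h1 h2
    have : e = q := by
      apply eq_of_shared hM he hq
      rcases hl with rfl | rfl <;> rcases hlq with h | h <;> tauto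
    rw [this]; exact ⟨hb1, hb2⟩
  have B1 : b < e.1 → e.1 < c → b < e.1 ∧ e.2 < c := fun h1 h2 => B0 e.1 (Or.inl rfl) h1 h2
  have B2 : b < e.2 → e.2 < c → b < e.1 ∧ e.2 < c := fun h1 h2 => B0 e.2 (Or.inr rfl) h1 h2
  simp only [ne_eq, Fin.ext_iff, Fin.lt_def] at A1 A2 B1 B2 C1 C2 helt hab' hcd' hbc hd1 hd2 ⊢
  omega

lemma swapOut (hM : IsCupDiagram M) (hOr : OrientedFor lam M)
    {a b c d : Fin n} (hab : (a, b) ∈ M) (hcd : (c, d) ∈ M) (hbc : b < c)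
    (hW : W M b c) (hL : lam b ≠ lam c) :
    ∃ M' : Finset (Fin n × Fin n),
      IsCupDiagram M' ∧ OrientedFor lam M' ∧ M'.card = M.card ∧ M' ≠ M := by
  classical
  have hab' := hM.1 _ hab
  have hcd' := hM.1 _ hcd
  simp only at hab' hcd'
  have hsep := sepOut hM hab hcd hbc hW
  set M' := insert (b, c) (insert (a, d) ((M.erase (a, b)).erase (c, d))) with hM'def
  have hmem : ∀ p, p ∈ M' ↔ (p = (b, c) ∨ p = (a, d) ∨ (p ∈ M ∧ p ≠ (a, b) ∧ p ≠ (c, d))) := by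
    intro p
    simp only [hM'def, Finset.mem_insert, Finset.mem_erase]
    tauto
  have hbcM : (b, c) ∉ M := by
    intro h
    have := eq_of_shared hM h hab (by simp)
    simp only [Prod.mk.injEq] at this
    rcases this with ⟨h1, h2⟩
    rw [h2] at hbc
    exact absurd hbc (lt_irrefl _)
  have hadM : (a, d) ∉ M := by
    intro h
    have := eq_of_shared hM h hab (by simp)
    simp only [Prod.mk.injEq] at this
    rcases this with ⟨h1, h2⟩
    simp only [Fin.ext_iff, Fin.lt_def] at *
    omega
  refine ⟨M', ⟨?_, ?_, ?_, ?_⟩, ?_, ?_, ?_⟩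
  · -- p.1 < p.2
    intro p hp
    rw [hmem] at hp
    rcases hp with rfl | rfl | ⟨hpM, _, _⟩
    · exact hbc
    · simp only [Fin.lt_def] at *; omega
    · exact hM.1 p hpM
  · -- distinct endpoints
    intro p hp q hq hne
    rw [hmem] at hp hq
    rcases hp with rfl | rfl | ⟨hpM, hp1, hp2⟩ <;> rcases hq with rfl | rfl | ⟨hqM, hq1, hq2⟩
    · exact absurd rfl hne
    · simp only [ne_eq, Fin.ext_iff, Fin.lt_def] at *; omega
    · have hs := hsep q hqM hq1 hq2
      have hlt := hM.1 q hqM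
      simp only [ne_eq, Fin.ext_iff, Fin.lt_def] at *
      omega
    · simp only [ne_eq, Fin.ext_iff, Fin.lt_def] at *; omega
    · exact absurd rfl hne
    · have hs := hsep q hqM hq1 hq2
      have hlt := hM.1 q hqM
      simp only [ne_eq, Fin.ext_iff, Fin.lt_def] at *
      omega
    · have hs := hsep p hpM hp1 hp2
      have hlt := hM.1 p hpM
      simp only [ne_eq, Fin.ext_iff, Fin.lt_def] at *
      omega
    · have hs := hsep p hpM hp1 hp2
      have hlt := hM.1 p hpM
      simp only [ne_eq, Fin.ext_iff, Fin.lt_def] at *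
      omega
    · exact hM.2.1 p hpM q hqM hne
  · -- non-crossing
    intro p hp q hq
    rw [hmem] at hp hq
    rcases hp with rfl | rfl | ⟨hpM, hp1, hp2⟩ <;> rcases hq with rfl | rfl | ⟨hqM, hq1, hq2⟩
    · simp only [Fin.lt_def] at *; omega
    · simp only [Fin.lt_def] at *; omega
    · have hs := hsep q hqM hq1 hq2
      have hlt := hM.1 q hqM
      simp only [ne_eq, Fin.ext_iff, Fin.lt_def] at *
      omega
    · simp only [Fin.lt_def] at *; omega
    · simp only [Fin.lt_def] at *; omega
    · have hs := hsep q hqM hq1 hq2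
      have hlt := hM.1 q hqM
      simp only [ne_eq, Fin.ext_iff, Fin.lt_def] at *
      omega
    · have hs := hsep p hpM hp1 hp2
      have hlt := hM.1 p hpM
      simp only [ne_eq, Fin.ext_iff, Fin.lt_def] at *
      omega
    · have hs := hsep p hpM hp1 hp2
      have hlt := hM.1 p hpM
      simp only [ne_eq, Fin.ext_iff, Fin.lt_def] at *
      omega
    · exact hM.2.2.1 p hpM q hqM
  · -- fill
    intro p hp l hl1 hl2
    have hget : ∀ q ∈ M, q ≠ (a,b) → q ≠ (c,d) → (l = q.1 ∨ l = q.2) → ∃ q' ∈ M', l = q'.1 ∨ l = q'.2 := by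
      intro q hq h1 h2 h3
      exact ⟨q, (hmem q).2 (Or.inr (Or.inr ⟨hq, h1, h2⟩)), h3⟩
    have hfix : ∀ q ∈ M, (l = q.1 ∨ l = q.2) → ∃ q' ∈ M', l = q'.1 ∨ l = q'.2 := by
      intro q hq h3
      by_cases e1 : q = (a, b)
      · subst e1
        rcases h3 with h3 | h3
        · exact ⟨(a, d), (hmem _).2 (Or.inr (Or.inl rfl)), Or.inl h3⟩
        · exact ⟨(b, c), (hmem _).2 (Or.inl rfl), Or.inl h3⟩
      by_cases e2 : q = (c, d)
      · subst e2
        rcases h3 with h3 | h3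
        · exact ⟨(b, c), (hmem _).2 (Or.inl rfl), Or.inr h3⟩
        · exact ⟨(a, d), (hmem _).2 (Or.inr (Or.inl rfl)), Or.inr h3⟩
      exact hget q hq e1 e2 h3
    have hWnew : b < l → l < c → ∃ q' ∈ M', l = q'.1 ∨ l = q'.2 := by
      intro g1 g2
      obtain ⟨e, he, h3, h4, h5⟩ := hW l g1 g2
      refine hget e he ?_ ?_ h3
      · intro hh; subst hh; simp only [Fin.lt_def] at *; omega
      · intro hh; subst hh; simp only [Fin.lt_def] at *; omega
    rw [hmem] at hp
    rcases hp with rfl | rfl | ⟨hpM, hp1, hp2⟩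
    · exact hWnew hl1 hl2
    · -- p = (a,d), l ∈ (a,d)
      simp only at hl1 hl2
      rcases lt_trichotomy l b with h | h | h
      · obtain ⟨q, hq, h3⟩ := hM.2.2.2 _ hab l hl1 h
        exact hfix q hq h3
      · exact ⟨(b, c), (hmem _).2 (Or.inl rfl), Or.inl (by rw [h])⟩
      rcases lt_trichotomy l c with h' | h' | h'
      · exact hWnew h h'
      · exact ⟨(b, c), (hmem _).2 (Or.inl rfl), Or.inr (by rw [h'])⟩
      · obtain ⟨q, hq, h3⟩ := hM.2.2.2 _ hcd l h' hl2
        exact hfix q hq h3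
    · obtain ⟨q, hq, h3⟩ := hM.2.2.2 p hpM l hl1 hl2
      exact hfix q hq h3
  · -- oriented
    intro p hp
    rw [hmem] at hp
    rcases hp with rfl | rfl | ⟨hpM, _, _⟩
    · exact hL
    · have h1 := hOr _ hab
      have h2 := hOr _ hcd
      simp only at h1 h2 ⊢
      revert h1 h2 hL
      cases lam a <;> cases lam b <;> cases lam c <;> cases lam d <;> simp
    · exact hOr p hpM
  · -- card
    have h1 : (c, d) ∈ M.erase (a, b) := by
      rw [Finset.mem_erase]
      refine ⟨?_, hcd⟩
      simp only [ne_eq, Prod.mk.injEq, Fin.ext_iff, Fin.lt_def] at *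
      omega
    have h2 : (a, d) ∉ (M.erase (a, b)).erase (c, d) := by
      simp only [Finset.mem_erase]
      intro hcon
      exact hadM hcon.2.2
    have h3 : (b, c) ∉ insert (a, d) ((M.erase (a, b)).erase (c, d)) := by
      simp only [Finset.mem_insert, Finset.mem_erase]
      rintro (hcon | hcon)
      · simp only [Prod.mk.injEq, Fin.ext_iff, Fin.lt_def] at *; omega
      · exact hbcM hcon.2.2
    rw [hM'def, Finset.card_insert_of_notMem h3, Finset.card_insert_of_notMem h2,
      Finset.card_erase_of_mem h1, Finset.card_erase_of_mem hab]
    have : 0 < (M.erase (a, b)).card := Finset.card_pos.2 ⟨_, h1⟩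
    have : 0 < M.card := Finset.card_pos.2 ⟨_, hab⟩
    have := Finset.card_erase_of_mem hab
    omega
  · -- M' ≠ M
    intro hcon
    rw [← hcon] at hbcM
    exact hbcM ((hmem _).2 (Or.inl rfl))

lemma w_transfer (hM : IsCupDiagram M)
    {a b c d : Fin n} (had : (a, d) ∈ M) (hbc : (b, c) ∈ M)
    (h1 : a < b) (h2 : c < d) (hWcd : W M c d) : W M a b := by
  intro l hl1 hl2
  have hbc' := hM.1 _ hbc
  have had' := hM.1 _ had
  simp only at hbc' had'
  have hlb : l < d := by simp only [Fin.lt_def] at *; omega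
  obtain ⟨e, he, h3, h4, h5⟩ := fill_inside hM had hl1 hlb
  refine ⟨e, he, h3, h4, ?_⟩
  have helt := hM.1 e he
  have hne_bc : e ≠ (b, c) := by
    intro hcon
    subst hcon
    simp only [Fin.lt_def] at *
    rcases h3 with h3 | h3 <;> (rw [h3] at hl2; omega)
  have hd := hM.2.1 e he _ hbc hne_bc
  have B1 : b < e.1 → e.1 < c → b < e.1 ∧ e.2 < c := fun u1 u2 =>
    straddle hM hbc he (Or.inl rfl) u1 u2
  have B2 : b < e.2 → e.2 < c → b < e.1 ∧ e.2 < c := fun u1 u2 =>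
    straddle hM hbc he (Or.inr rfl) u1 u2
  have G2 : c < e.2 → e.2 < d → c < e.1 ∧ e.2 < d := by
    intro u1 u2
    obtain ⟨q, hq, hlq, hb1, hb2⟩ := hWcd e.2 u1 u2
    have : e = q := by
      apply eq_of_shared hM he hq
      rcases hlq with h | h <;> tauto
    rw [this]; exact ⟨hb1, hb2⟩
  have hned : e.2 ≠ d := by
    intro hcon
    have : e = (a, d) := eq_of_shared hM he had (by simp [hcon])
    subst this
    simp only [Fin.lt_def] at *
    rcases h3 with h3 | h3 <;> (rw [h3] at hl2 hl1; omega)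
  rcases h3 with h3 | h3 <;>
    (simp only [ne_eq, Fin.ext_iff, Fin.lt_def] at *; omega)

lemma sepIn (hM : IsCupDiagram M)
    {a b c d : Fin n} (had : (a, d) ∈ M) (hbc : (b, c) ∈ M)
    (h1 : a < b) (h2 : c < d) (hW : W M a b) :
    ∀ e ∈ M, e ≠ (a, d) → e ≠ (b, c) →
      (e.2 < a) ∨ (a < e.1 ∧ e.2 < b) ∨ (b < e.1 ∧ e.2 < c) ∨
      (c < e.1 ∧ e.2 < d) ∨ (d < e.1) ∨ (e.1 < a ∧ d < e.2) := by
  intro e he hne1 hne2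
  have hd1 := hM.2.1 e he _ had hne1
  have hd2 := hM.2.1 e he _ hbc hne2
  have helt := hM.1 e he
  have had' := hM.1 _ had
  have hbc' := hM.1 _ hbc
  have E1 : a < e.1 → e.1 < d → a < e.1 ∧ e.2 < d := fun u1 u2 =>
    straddle hM had he (Or.inl rfl) u1 u2
  have E2 : a < e.2 → e.2 < d → a < e.1 ∧ e.2 < d := fun u1 u2 =>
    straddle hM had he (Or.inr rfl) u1 u2
  have B1 : b < e.1 → e.1 < c → b < e.1 ∧ e.2 < c := fun u1 u2 =>
    straddle hM hbc he (Or.inl rfl) u1 u2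
  have B2 : b < e.2 → e.2 < c → b < e.1 ∧ e.2 < c := fun u1 u2 =>
    straddle hM hbc he (Or.inr rfl) u1 u2
  have G0 : ∀ l : Fin n, (l = e.1 ∨ l = e.2) → a < l → l < b → a < e.1 ∧ e.2 < b := by
    intro l hl u1 u2
    obtain ⟨q, hq, hlq, hb1, hb2⟩ := hW l u1 u2
    have : e = q := by
      apply eq_of_shared hM he hq
      rcases hl with rfl | rfl <;> rcases hlq with h | h <;> tauto
    rw [this]; exact ⟨hb1, hb2⟩
  have G1 : a < e.1 → e.1 < b → a < e.1 ∧ e.2 < b := fun u1 u2 => G0 e.1 (Or.inl rfl) u1 u2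
  have G2 : a < e.2 → e.2 < b → a < e.1 ∧ e.2 < b := fun u1 u2 => G0 e.2 (Or.inr rfl) u1 u2
  simp only [ne_eq, Fin.ext_iff, Fin.lt_def] at E1 E2 B1 B2 G1 G2 helt had' hbc' h1 h2 hd1 hd2 ⊢
  omega

lemma swapIn (hM : IsCupDiagram M) (hOr : OrientedFor lam M)
    {a b c d : Fin n} (had : (a, d) ∈ M) (hbc : (b, c) ∈ M)
    (h1 : a < b) (h2 : c < d) (hW : W M a b) (hL : lam a ≠ lam b) :
    ∃ M' : Finset (Fin n × Fin n),
      IsCupDiagram M' ∧ OrientedFor lam M' ∧ M'.card = M.card ∧ M' ≠ M := by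
  classical
  have had' := hM.1 _ had
  have hbc' := hM.1 _ hbc
  simp only at had' hbc'
  have hsep := sepIn hM had hbc h1 h2 hW
  set M' := insert (a, b) (insert (c, d) ((M.erase (a, d)).erase (b, c))) with hM'def
  have hmem : ∀ p, p ∈ M' ↔ (p = (a, b) ∨ p = (c, d) ∨ (p ∈ M ∧ p ≠ (a, d) ∧ p ≠ (b, c))) := by
    intro p
    simp only [hM'def, Finset.mem_insert, Finset.mem_erase]
    tauto
  have habM : (a, b) ∉ M := by
    intro h
    have := eq_of_shared hM h had (by simp)
    simp only [Prod.mk.injEq, Fin.ext_iff, Fin.lt_def] at *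
    omega
  have hcdM : (c, d) ∉ M := by
    intro h
    have := eq_of_shared hM h had (by simp)
    simp only [Prod.mk.injEq, Fin.ext_iff, Fin.lt_def] at *
    omega
  refine ⟨M', ⟨?_, ?_, ?_, ?_⟩, ?_, ?_, ?_⟩
  · intro p hp
    rw [hmem] at hp
    rcases hp with rfl | rfl | ⟨hpM, _, _⟩
    · exact h1
    · exact h2
    · exact hM.1 p hpM
  · intro p hp q hq hne
    rw [hmem] at hp hq
    rcases hp with rfl | rfl | ⟨hpM, hp1, hp2⟩ <;> rcases hq with rfl | rfl | ⟨hqM, hq1, hq2⟩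
    · exact absurd rfl hne
    · simp only [ne_eq, Fin.ext_iff, Fin.lt_def] at *; omega
    · have hs := hsep q hqM hq1 hq2
      have hlt := hM.1 q hqM
      simp only [ne_eq, Fin.ext_iff, Fin.lt_def] at *
      omega
    · simp only [ne_eq, Fin.ext_iff, Fin.lt_def] at *; omega
    · exact absurd rfl hne
    · have hs := hsep q hqM hq1 hq2
      have hlt := hM.1 q hqM
      simp only [ne_eq, Fin.ext_iff, Fin.lt_def] at *
      omega
    · have hs := hsep p hpM hp1 hp2
      have hlt := hM.1 p hpM
      simp only [ne_eq, Fin.ext_iff, Fin.lt_def] at *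
      omega
    · have hs := hsep p hpM hp1 hp2
      have hlt := hM.1 p hpM
      simp only [ne_eq, Fin.ext_iff, Fin.lt_def] at *
      omega
    · exact hM.2.1 p hpM q hqM hne
  · intro p hp q hq
    rw [hmem] at hp hq
    rcases hp with rfl | rfl | ⟨hpM, hp1, hp2⟩ <;> rcases hq with rfl | rfl | ⟨hqM, hq1, hq2⟩
    · simp only [Fin.lt_def] at *; omega
    · simp only [Fin.lt_def] at *; omega
    · have hs := hsep q hqM hq1 hq2
      have hlt := hM.1 q hqM
      simp only [ne_eq, Fin.ext_iff, Fin.lt_def] at *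
      omega
    · simp only [Fin.lt_def] at *; omega
    · simp only [Fin.lt_def] at *; omega
    · have hs := hsep q hqM hq1 hq2
      have hlt := hM.1 q hqM
      simp only [ne_eq, Fin.ext_iff, Fin.lt_def] at *
      omega
    · have hs := hsep p hpM hp1 hp2
      have hlt := hM.1 p hpM
      simp only [ne_eq, Fin.ext_iff, Fin.lt_def] at *
      omega
    · have hs := hsep p hpM hp1 hp2
      have hlt := hM.1 p hpM
      simp only [ne_eq, Fin.ext_iff, Fin.lt_def] at *
      omega
    · exact hM.2.2.1 p hpM q hqM
  · -- fill
    intro p hp l hl1 hl2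
    have hget : ∀ q ∈ M, q ≠ (a, d) → q ≠ (b, c) → (l = q.1 ∨ l = q.2) →
        ∃ q' ∈ M', l = q'.1 ∨ l = q'.2 := by
      intro q hq u1 u2 u3
      exact ⟨q, (hmem q).2 (Or.inr (Or.inr ⟨hq, u1, u2⟩)), u3⟩
    have hfix : ∀ q ∈ M, (l = q.1 ∨ l = q.2) → ∃ q' ∈ M', l = q'.1 ∨ l = q'.2 := by
      intro q hq h3
      by_cases e1 : q = (a, d)
      · subst e1
        rcases h3 with h3 | h3
        · exact ⟨(a, b), (hmem _).2 (Or.inl rfl), Or.inl h3⟩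
        · exact ⟨(c, d), (hmem _).2 (Or.inr (Or.inl rfl)), Or.inr h3⟩
      by_cases e2 : q = (b, c)
      · subst e2
        rcases h3 with h3 | h3
        · exact ⟨(a, b), (hmem _).2 (Or.inl rfl), Or.inr h3⟩
        · exact ⟨(c, d), (hmem _).2 (Or.inr (Or.inl rfl)), Or.inl h3⟩
      exact hget q hq e1 e2 h3
    rw [hmem] at hp
    rcases hp with rfl | rfl | ⟨hpM, hp1, hp2⟩
    · -- p = (a,b)
      simp only at hl1 hl2
      obtain ⟨e, he, h3, h4, h5⟩ := hW l hl1 hl2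
      refine hget e he ?_ ?_ h3
      · intro hh; subst hh; simp only [Fin.lt_def] at *; omega
      · intro hh; subst hh; simp only [Fin.lt_def] at *; omega
    · -- p = (c,d)
      simp only at hl1 hl2
      have g1 : a < l := by simp only [Fin.lt_def] at *; omega
      have g2 : l < d := hl2
      obtain ⟨q, hq, h3⟩ := hM.2.2.2 _ had l g1 g2
      exact hfix q hq h3
    · obtain ⟨q, hq, h3⟩ := hM.2.2.2 p hpM l hl1 hl2
      exact hfix q hq h3
  · intro p hp
    rw [hmem] at hp
    rcases hp with rfl | rfl | ⟨hpM, _, _⟩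
    · exact hL
    · have u1 := hOr _ had
      have u2 := hOr _ hbc
      simp only at u1 u2 ⊢
      revert u1 u2 hL
      cases lam a <;> cases lam b <;> cases lam c <;> cases lam d <;> simp
    · exact hOr p hpM
  · have h1' : (b, c) ∈ M.erase (a, d) := by
      rw [Finset.mem_erase]
      refine ⟨?_, hbc⟩
      simp only [ne_eq, Prod.mk.injEq, Fin.ext_iff, Fin.lt_def] at *
      omega
    have h2' : (c, d) ∉ (M.erase (a, d)).erase (b, c) := by
      simp only [Finset.mem_erase]
      intro hcon
      exact hcdM hcon.2.2
    have h3' : (a, b) ∉ insert (c, d) ((M.erase (a, d)).erase (b, c)) := by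
      simp only [Finset.mem_insert, Finset.mem_erase]
      rintro (hcon | hcon)
      · simp only [Prod.mk.injEq, Fin.ext_iff, Fin.lt_def] at *; omega
      · exact habM hcon.2.2
    rw [hM'def, Finset.card_insert_of_notMem h3', Finset.card_insert_of_notMem h2',
      Finset.card_erase_of_mem h1', Finset.card_erase_of_mem had]
    have : 0 < (M.erase (a, d)).card := Finset.card_pos.2 ⟨_, h1'⟩
    have : 0 < M.card := Finset.card_pos.2 ⟨_, had⟩
    have := Finset.card_erase_of_mem had
    omega
  · intro hcon
    rw [← hcon] at habM
    exact habM ((hmem _).2 (Or.inl rfl))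
lemma free_not_inside (hM : IsCupDiagram M) {g : Fin n} (hg : ¬ Endpt M g) :
    ∀ e ∈ M, ¬(e.1 < g ∧ g < e.2) := by
  rintro e he ⟨u1, u2⟩
  obtain ⟨q, hq, h3⟩ := hM.2.2.2 e he g u1 u2
  exact hg ⟨q, hq, h3⟩

lemma free_not_endpt {g : Fin n} (hg : ¬ Endpt M g) :
    ∀ e ∈ M, e.1 ≠ g ∧ e.2 ≠ g := by
  intro e he
  constructor <;> (intro h; exact hg ⟨e, he, by tauto⟩)

lemma sep4 (hM : IsCupDiagram M)
    {x u g : Fin n} (hxu : (x, u) ∈ M) (hg : ¬ Endpt M g) (hug : u < g)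
    (hW : W M u g) :
    ∀ e ∈ M, e ≠ (x, u) →
      (e.2 < x) ∨ (x < e.1 ∧ e.2 < u) ∨ (u < e.1 ∧ e.2 < g) ∨ (g < e.1) := by
  intro e he hne
  have hd := hM.2.1 e he _ hxu hne
  have helt := hM.1 e he
  have hxu' := hM.1 _ hxu
  have hgin := free_not_inside hM hg e he
  have hgend := free_not_endpt hg e he
  have S1 : x < e.1 → e.1 < u → x < e.1 ∧ e.2 < u := fun u1 u2 =>
    straddle hM hxu he (Or.inl rfl) u1 u2
  have S2 : x < e.2 → e.2 < u → x < e.1 ∧ e.2 < u := fun u1 u2 =>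
    straddle hM hxu he (Or.inr rfl) u1 u2
  have G0 : ∀ l : Fin n, (l = e.1 ∨ l = e.2) → u < l → l < g → u < e.1 ∧ e.2 < g := by
    intro l hl u1 u2
    obtain ⟨q, hq, hlq, hb1, hb2⟩ := hW l u1 u2
    have : e = q := by
      apply eq_of_shared hM he hq
      rcases hl with rfl | rfl <;> rcases hlq with h | h <;> tauto
    rw [this]; exact ⟨hb1, hb2⟩
  have G1 : u < e.1 → e.1 < g → u < e.1 ∧ e.2 < g := fun u1 u2 => G0 e.1 (Or.inl rfl) u1 u2
  have G2 : u < e.2 → e.2 < g → u < e.1 ∧ e.2 < g := fun u1 u2 => G0 e.2 (Or.inr rfl) u1 u2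
  simp only [ne_eq, Fin.ext_iff, Fin.lt_def] at S1 S2 G1 G2 helt hxu' hug hd hgin hgend ⊢
  omega

lemma surgery4 (hM : IsCupDiagram M) (hOr : OrientedFor lam M)
    {x u g : Fin n} (hxu : (x, u) ∈ M) (hg : ¬ Endpt M g) (hug : u < g)
    (hW : W M u g) (hL : lam g ≠ lam u) :
    ∃ M' : Finset (Fin n × Fin n),
      IsCupDiagram M' ∧ OrientedFor lam M' ∧ M'.card = M.card ∧ M' ≠ M := by
  classical
  have hxu' := hM.1 _ hxu
  simp only at hxu'
  have hsep := sep4 hM hxu hg hug hW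
  set M' := insert (u, g) (M.erase (x, u)) with hM'def
  have hmem : ∀ p, p ∈ M' ↔ (p = (u, g) ∨ (p ∈ M ∧ p ≠ (x, u))) := by
    intro p
    simp only [hM'def, Finset.mem_insert, Finset.mem_erase]
    tauto
  have hugM : (u, g) ∉ M := by
    intro h
    exact hg ⟨(u, g), h, Or.inr rfl⟩
  refine ⟨M', ⟨?_, ?_, ?_, ?_⟩, ?_, ?_, ?_⟩
  · intro p hp
    rw [hmem] at hp
    rcases hp with rfl | ⟨hpM, _⟩
    · exact hug
    · exact hM.1 p hpM
  · intro p hp q hq hne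
    rw [hmem] at hp hq
    rcases hp with rfl | ⟨hpM, hp1⟩ <;> rcases hq with rfl | ⟨hqM, hq1⟩
    · exact absurd rfl hne
    · have hs := hsep q hqM hq1
      have hlt := hM.1 q hqM
      have hge := free_not_endpt hg q hqM
      simp only [ne_eq, Fin.ext_iff, Fin.lt_def] at *
      omega
    · have hs := hsep p hpM hp1
      have hlt := hM.1 p hpM
      have hge := free_not_endpt hg p hpM
      simp only [ne_eq, Fin.ext_iff, Fin.lt_def] at *
      omega
    · exact hM.2.1 p hpM q hqM hne
  · intro p hp q hq
    rw [hmem] at hp hq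
    rcases hp with rfl | ⟨hpM, hp1⟩ <;> rcases hq with rfl | ⟨hqM, hq1⟩
    · simp only [Fin.lt_def] at *; omega
    · have hs := hsep q hqM hq1
      have hlt := hM.1 q hqM
      simp only [ne_eq, Fin.ext_iff, Fin.lt_def] at *
      omega
    · have hs := hsep p hpM hp1
      have hlt := hM.1 p hpM
      simp only [ne_eq, Fin.ext_iff, Fin.lt_def] at *
      omega
    · exact hM.2.2.1 p hpM q hqM
  · intro p hp l hl1 hl2
    have hget : ∀ q ∈ M, q ≠ (x, u) → (l = q.1 ∨ l = q.2) →
        ∃ q' ∈ M', l = q'.1 ∨ l = q'.2 := by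
      intro q hq u1 u3
      exact ⟨q, (hmem q).2 (Or.inr ⟨hq, u1⟩), u3⟩
    rw [hmem] at hp
    rcases hp with rfl | ⟨hpM, hp1⟩
    · simp only at hl1 hl2
      obtain ⟨e, he, h3, h4, h5⟩ := hW l hl1 hl2
      refine hget e he ?_ h3
      intro hh; subst hh; simp only [Fin.lt_def] at *; omega
    · obtain ⟨q, hq, h3⟩ := hM.2.2.2 p hpM l hl1 hl2
      by_cases e1 : q = (x, u)
      · subst e1
        rcases h3 with h3 | h3
        · -- l = x strictly inside old cup p : impossible
          exfalso
          have hs := hsep p hpM hp1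
          rw [h3] at hl1 hl2
          simp only [ne_eq, Fin.ext_iff, Fin.lt_def] at *
          omega
        · exact ⟨(u, g), (hmem _).2 (Or.inl rfl), Or.inl h3⟩
      · exact hget q hq e1 h3
  · intro p hp
    rw [hmem] at hp
    rcases hp with rfl | ⟨hpM, _⟩
    · exact fun h => hL (by simpa using h.symm)
    · exact hOr p hpM
  · have h2' : (u, g) ∉ M.erase (x, u) := by
      simp only [Finset.mem_erase]
      intro hcon
      exact hugM hcon.2
    rw [hM'def, Finset.card_insert_of_notMem h2', Finset.card_erase_of_mem hxu]
    have : 0 < M.card := Finset.card_pos.2 ⟨_, hxu⟩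
    omega
  · intro hcon
    rw [← hcon] at hugM
    exact hugM ((hmem _).2 (Or.inl rfl))

lemma sep5 (hM : IsCupDiagram M)
    {u x g : Fin n} (hux : (u, x) ∈ M) (hg : ¬ Endpt M g) (hgu : g < u)
    (hW : W M g u) :
    ∀ e ∈ M, e ≠ (u, x) →
      (e.2 < g) ∨ (g < e.1 ∧ e.2 < u) ∨ (u < e.1 ∧ e.2 < x) ∨ (x < e.1) := by
  intro e he hne
  have hd := hM.2.1 e he _ hux hne
  have helt := hM.1 e he
  have hux' := hM.1 _ hux
  have hgin := free_not_inside hM hg e he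
  have hgend := free_not_endpt hg e he
  have S1 : u < e.1 → e.1 < x → u < e.1 ∧ e.2 < x := fun u1 u2 =>
    straddle hM hux he (Or.inl rfl) u1 u2
  have S2 : u < e.2 → e.2 < x → u < e.1 ∧ e.2 < x := fun u1 u2 =>
    straddle hM hux he (Or.inr rfl) u1 u2
  have G0 : ∀ l : Fin n, (l = e.1 ∨ l = e.2) → g < l → l < u → g < e.1 ∧ e.2 < u := by
    intro l hl u1 u2
    obtain ⟨q, hq, hlq, hb1, hb2⟩ := hW l u1 u2
    have : e = q := by
      apply eq_of_shared hM he hq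
      rcases hl with rfl | rfl <;> rcases hlq with h | h <;> tauto
    rw [this]; exact ⟨hb1, hb2⟩
  have G1 : g < e.1 → e.1 < u → g < e.1 ∧ e.2 < u := fun u1 u2 => G0 e.1 (Or.inl rfl) u1 u2
  have G2 : g < e.2 → e.2 < u → g < e.1 ∧ e.2 < u := fun u1 u2 => G0 e.2 (Or.inr rfl) u1 u2
  simp only [ne_eq, Fin.ext_iff, Fin.lt_def] at S1 S2 G1 G2 helt hux' hgu hd hgin hgend ⊢
  omega

lemma surgery5 (hM : IsCupDiagram M) (hOr : OrientedFor lam M)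
    {u x g : Fin n} (hux : (u, x) ∈ M) (hg : ¬ Endpt M g) (hgu : g < u)
    (hW : W M g u) (hL : lam g ≠ lam u) :
    ∃ M' : Finset (Fin n × Fin n),
      IsCupDiagram M' ∧ OrientedFor lam M' ∧ M'.card = M.card ∧ M' ≠ M := by
  classical
  have hux' := hM.1 _ hux
  simp only at hux'
  have hsep := sep5 hM hux hg hgu hW
  set M' := insert (g, u) (M.erase (u, x)) with hM'def
  have hmem : ∀ p, p ∈ M' ↔ (p = (g, u) ∨ (p ∈ M ∧ p ≠ (u, x))) := by
    intro p
    simp only [hM'def, Finset.mem_insert, Finset.mem_erase]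
    tauto
  have hguM : (g, u) ∉ M := by
    intro h
    exact hg ⟨(g, u), h, Or.inl rfl⟩
  refine ⟨M', ⟨?_, ?_, ?_, ?_⟩, ?_, ?_, ?_⟩
  · intro p hp
    rw [hmem] at hp
    rcases hp with rfl | ⟨hpM, _⟩
    · exact hgu
    · exact hM.1 p hpM
  · intro p hp q hq hne
    rw [hmem] at hp hq
    rcases hp with rfl | ⟨hpM, hp1⟩ <;> rcases hq with rfl | ⟨hqM, hq1⟩
    · exact absurd rfl hne
    · have hs := hsep q hqM hq1
      have hlt := hM.1 q hqM
      have hge := free_not_endpt hg q hqM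
      simp only [ne_eq, Fin.ext_iff, Fin.lt_def] at *
      omega
    · have hs := hsep p hpM hp1
      have hlt := hM.1 p hpM
      have hge := free_not_endpt hg p hpM
      simp only [ne_eq, Fin.ext_iff, Fin.lt_def] at *
      omega
    · exact hM.2.1 p hpM q hqM hne
  · intro p hp q hq
    rw [hmem] at hp hq
    rcases hp with rfl | ⟨hpM, hp1⟩ <;> rcases hq with rfl | ⟨hqM, hq1⟩
    · simp only [Fin.lt_def] at *; omega
    · have hs := hsep q hqM hq1
      have hlt := hM.1 q hqM
      simp only [ne_eq, Fin.ext_iff, Fin.lt_def] at *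
      omega
    · have hs := hsep p hpM hp1
      have hlt := hM.1 p hpM
      simp only [ne_eq, Fin.ext_iff, Fin.lt_def] at *
      omega
    · exact hM.2.2.1 p hpM q hqM
  · intro p hp l hl1 hl2
    have hget : ∀ q ∈ M, q ≠ (u, x) → (l = q.1 ∨ l = q.2) →
        ∃ q' ∈ M', l = q'.1 ∨ l = q'.2 := by
      intro q hq u1 u3
      exact ⟨q, (hmem q).2 (Or.inr ⟨hq, u1⟩), u3⟩
    rw [hmem] at hp
    rcases hp with rfl | ⟨hpM, hp1⟩
    · simp only at hl1 hl2
      obtain ⟨e, he, h3, h4, h5⟩ := hW l hl1 hl2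
      refine hget e he ?_ h3
      intro hh; subst hh; simp only [Fin.lt_def] at *; omega
    · obtain ⟨q, hq, h3⟩ := hM.2.2.2 p hpM l hl1 hl2
      by_cases e1 : q = (u, x)
      · subst e1
        rcases h3 with h3 | h3
        · exact ⟨(g, u), (hmem _).2 (Or.inl rfl), Or.inr h3⟩
        · exfalso
          have hs := hsep p hpM hp1
          rw [h3] at hl1 hl2
          simp only [ne_eq, Fin.ext_iff, Fin.lt_def] at *
          omega
      · exact hget q hq e1 h3
  · intro p hp
    rw [hmem] at hp
    rcases hp with rfl | ⟨hpM, _⟩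
    · exact hL
    · exact hOr p hpM
  · have h2' : (g, u) ∉ M.erase (u, x) := by
      simp only [Finset.mem_erase]
      intro hcon
      exact hguM hcon.2
    rw [hM'def, Finset.card_insert_of_notMem h2', Finset.card_erase_of_mem hux]
    have : 0 < M.card := Finset.card_pos.2 ⟨_, hux⟩
    omega
  · intro hcon
    rw [← hcon] at hguM
    exact hguM ((hmem _).2 (Or.inl rfl))

lemma W_adj {b c : Fin n} (h : b.val + 1 = c.val) : W M b c := by
  intro l h1 h2
  exfalso
  simp only [Fin.lt_def] at h1 h2
  omega

lemma W_single (hM : IsCupDiagram M) {s : Fin n × Fin n} (hs : s ∈ M)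
    {b c : Fin n} (h1 : b.val + 1 = s.1.val) (h2 : s.2.val + 1 = c.val) : W M b c := by
  intro l g1 g2
  have : s.1 ≤ l ∧ l ≤ s.2 := by
    simp only [Fin.le_def, Fin.lt_def] at *
    omega
  obtain ⟨q, hq, h3, h4, h5⟩ := cup_of_mem_closed hM hs this.1 this.2
  refine ⟨q, hq, h3, ?_, ?_⟩ <;> (simp only [Fin.le_def, Fin.lt_def] at *; omega)

lemma exists_outermost (hM : IsCupDiagram M) {l : Fin n} (hl : Endpt M l) :
    ∃ O ∈ M, O.1 ≤ l ∧ l ≤ O.2 ∧ ∀ e ∈ M, ¬(e.1 < O.1 ∧ O.2 < e.2) := by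
  classical
  have hne : (M.filter (fun c => c.1 ≤ l ∧ l ≤ c.2)).Nonempty := by
    obtain ⟨c, hc, hend⟩ := hl
    refine ⟨c, Finset.mem_filter.2 ⟨hc, ?_⟩⟩
    have := hM.1 c hc
    rcases hend with rfl | rfl
    · exact ⟨le_refl _, le_of_lt this⟩
    · exact ⟨le_of_lt this, le_refl _⟩
  obtain ⟨O, hO, hmin⟩ := Finset.exists_min_image _ (fun c => c.1.val) hne
  rw [Finset.mem_filter] at hO
  refine ⟨O, hO.1, hO.2.1, hO.2.2, ?_⟩
  rintro e he ⟨g1, g2⟩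
  have : e ∈ M.filter (fun c => c.1 ≤ l ∧ l ≤ c.2) := by
    rw [Finset.mem_filter]
    refine ⟨he, le_trans (le_of_lt g1) hO.2.1, le_trans hO.2.2 (le_of_lt g2)⟩
  have := hmin e this
  simp only [Fin.lt_def, Fin.le_def] at *
  omega

lemma closed_right (hM : IsCupDiagram M) {O : Fin n × Fin n} (hO : O ∈ M)
    (hout : ∀ e ∈ M, ¬(e.1 < O.1 ∧ O.2 < e.2)) :
    ∀ c ∈ M, c.1 ≤ O.2 → c.2 ≤ O.2 := by
  intro c hc
  by_cases hcO : c = O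
  · subst hcO; intro _; exact le_refl _
  have hd := hM.2.1 c hc O hO hcO
  have hn2 := hM.2.2.1 O hO c hc
  have hoc := hout c hc
  have hlt := hM.1 c hc
  have hltO := hM.1 O hO
  have T2 : O.1 < c.2 → c.2 < O.2 → O.1 < c.1 ∧ c.2 < O.2 := fun u1 u2 =>
    straddle hM hO hc (Or.inr rfl) u1 u2
  simp only [ne_eq, Fin.ext_iff, Fin.lt_def, Fin.le_def] at *
  omega

lemma closed_left (hM : IsCupDiagram M) {O : Fin n × Fin n} (hO : O ∈ M)
    (hout : ∀ e ∈ M, ¬(e.1 < O.1 ∧ O.2 < e.2)) :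
    ∀ c ∈ M, O.1 ≤ c.2 → O.1 ≤ c.1 := by
  intro c hc
  by_cases hcO : c = O
  · subst hcO; intro _; exact le_refl _
  have hd := hM.2.1 c hc O hO hcO
  have hn2 := hM.2.2.1 c hc O hO
  have hoc := hout c hc
  have hlt := hM.1 c hc
  have hltO := hM.1 O hO
  have T1 : O.1 < c.1 → c.1 < O.2 → O.1 < c.1 ∧ c.2 < O.2 := fun u1 u2 =>
    straddle hM hO hc (Or.inl rfl) u1 u2
  simp only [ne_eq, Fin.ext_iff, Fin.lt_def, Fin.le_def] at *
  omega

lemma chainR (hM : IsCupDiagram M) :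
    ∀ m : ℕ, ∀ u : Fin n, (∀ c ∈ M, c.1 ≤ u → c.2 ≤ u) →
    (∃ f : Fin n, ¬ Endpt M f ∧ u < f) → n - u.val ≤ m →
    ∃ g : Fin n, ¬ Endpt M g ∧ u < g ∧ W M u g := by
  intro m
  induction m with
  | zero =>
    intro u _ ⟨f, _, huf⟩ hb
    exfalso
    have := f.isLt
    simp only [Fin.lt_def] at huf
    omega
  | succ m ih =>
    rintro u hcl ⟨f0, hf0, huf0⟩ hb
    have hf0lt := f0.isLt
    have hu1 : u.val + 1 < n := by
      simp only [Fin.lt_def] at huf0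
      omega
    set u1 : Fin n := ⟨u.val + 1, hu1⟩ with hu1def
    have hu1val : (u1 : Fin n).val = u.val + 1 := rfl
    by_cases h1 : Endpt M u1
    · obtain ⟨c, hc, hcend⟩ := h1
      have hclt := hM.1 c hc
      have hc1 : c.1 = u1 := by
        rcases hcend with h | h
        · exact h.symm
        · exfalso
          have hv : c.2.val = u.val + 1 := by rw [← h]
          have h8 : c.1 ≤ u := by
            have h9 := hclt
            simp only [Fin.lt_def] at h9
            simp only [Fin.le_def]
            omega
          have h7 := hcl c hc h8
          simp only [Fin.le_def] at h7
          omega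
      have hEgt : u1 < c.2 := by rw [← hc1]; exact hclt
      -- closedness at c.2
      have hclE : ∀ e ∈ M, e.1 ≤ c.2 → e.2 ≤ c.2 := by
        intro e he hle
        rcases lt_trichotomy e.1.val u1.val with h | h | h
        · have : e.1 ≤ u := by simp only [Fin.le_def]; simp only [hu1def] at h; omega
          have := hcl e he this
          simp only [Fin.le_def, Fin.lt_def] at *
          omega
        · have : e = c := by
            apply eq_of_shared hM he hc
            left; rw [hc1]; exact Fin.ext h
          rw [this]
        · by_cases hec : e = c
          · rw [hec]
          have hd := hM.2.1 e he c hc hec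
          have he2 : e.1 < c.2 := by
            simp only [Fin.le_def, Fin.lt_def, ne_eq, Fin.ext_iff] at *
            omega
          have := straddle hM hc he (Or.inl rfl) (by rw [hc1]; exact Fin.lt_def.mpr h) he2
          exact le_of_lt this.2
      -- the free position is beyond c.2
      have hf0E : c.2 < f0 := by
        rcases lt_trichotomy c.2.val f0.val with h | h | h
        · exact Fin.lt_def.mpr h
        · exfalso; exact hf0 ⟨c, hc, Or.inr (Fin.ext h.symm)⟩
        · exfalso
          have hf01 : u1 ≤ f0 := by
            simp only [Fin.le_def, Fin.lt_def] at *
            omega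
          rcases eq_or_lt_of_le hf01 with heq | hlt'
          · exact hf0 ⟨c, hc, Or.inl (by rw [← heq, hc1])⟩
          · obtain ⟨q, hq, h3⟩ := hM.2.2.2 c hc f0 (by rw [hc1]; exact hlt') (Fin.lt_def.mpr h)
            exact hf0 ⟨q, hq, h3⟩
      have hmeas : n - c.2.val ≤ m := by
        have h9 : (u1 : Fin n).val < c.2.val := hEgt
        have h10 : (u1 : Fin n).val = u.val + 1 := rfl
        omega
      obtain ⟨g, hgfree, hgE, hWEg⟩ := ih c.2 hclE ⟨f0, hf0, hf0E⟩ hmeas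
      have huu1 : u < u1 := by simp only [Fin.lt_def]; omega
      refine ⟨g, hgfree, lt_trans huu1 (lt_trans hEgt hgE), ?_⟩
      intro l g1 g2
      rcases lt_trichotomy l.val u1.val with h | h | h
      · exfalso
        have hv : u.val + 1 = (u1 : Fin n).val := rfl
        simp only [Fin.lt_def] at g1
        omega
      · refine ⟨c, hc, Or.inl (by rw [hc1]; exact Fin.ext h), ?_, hgE⟩
        rw [hc1]; exact huu1
      rcases lt_trichotomy l.val c.2.val with h' | h' | h'
      · obtain ⟨q, hq, h3, h4, h5⟩ := fill_inside hM hc (by rw [hc1]; exact Fin.lt_def.mpr h) (by exact Fin.lt_def.mpr h')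
        rw [hc1] at h4
        exact ⟨q, hq, h3, lt_trans huu1 h4, lt_trans h5 hgE⟩
      · refine ⟨c, hc, Or.inr (Fin.ext h'), ?_, hgE⟩
        rw [hc1]; exact huu1
      · obtain ⟨q, hq, h3, h4, h5⟩ := hWEg l (Fin.lt_def.mpr h') g2
        exact ⟨q, hq, h3, lt_trans (lt_trans huu1 hEgt) h4, h5⟩
    · refine ⟨u1, h1, ?_, W_adj rfl⟩
      simp only [Fin.lt_def]; omega

lemma chainL (hM : IsCupDiagram M) :
    ∀ m : ℕ, ∀ u : Fin n, (∀ c ∈ M, u ≤ c.2 → u ≤ c.1) →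
    (∃ f : Fin n, ¬ Endpt M f ∧ f < u) → u.val ≤ m →
    ∃ g : Fin n, ¬ Endpt M g ∧ g < u ∧ W M g u := by
  intro m
  induction m with
  | zero =>
    intro u _ ⟨f, _, huf⟩ hb
    exfalso
    simp only [Fin.lt_def] at huf
    omega
  | succ m ih =>
    rintro u hcl ⟨f0, hf0, huf0⟩ hb
    have hupos : 0 < u.val := by
      simp only [Fin.lt_def] at huf0
      omega
    have hu1 : u.val - 1 < n := by
      have := u.isLt
      omega
    set u1 : Fin n := ⟨u.val - 1, hu1⟩ with hu1def
    have hu1v : (u1 : Fin n).val = u.val - 1 := rfl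
    have huu1 : u1 < u := by simp only [Fin.lt_def]; omega
    by_cases h1 : Endpt M u1
    · obtain ⟨c, hc, hcend⟩ := h1
      have hclt := hM.1 c hc
      have hc2 : c.2 = u1 := by
        rcases hcend with h | h
        · exfalso
          have h8 : u ≤ c.2 := by
            have h9 := hclt
            simp only [Fin.lt_def] at h9
            simp only [Fin.le_def]
            rw [← h] at h9
            omega
          have h7 := hcl c hc h8
          simp only [Fin.le_def, ← h] at h7
          omega
        · exact h.symm
      have hEgt : c.1 < u1 := by rw [← hc2]; exact hclt
      have hclE : ∀ e ∈ M, c.1 ≤ e.2 → c.1 ≤ e.1 := by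
        intro e he hle
        rcases lt_trichotomy e.2.val u1.val with h | h | h
        · rcases lt_trichotomy e.2.val c.1.val with h' | h' | h'
          · exfalso
            simp only [Fin.le_def] at hle
            omega
          · exfalso
            have : e = c := eq_of_shared hM he hc (by right; right; left; exact Fin.ext h')
            rw [this] at h
            omega
          · have := straddle hM hc he (Or.inr rfl) (Fin.lt_def.mpr h')
              (by rw [hc2]; exact Fin.lt_def.mpr h)
            exact le_of_lt this.1
        · have : e = c := by
            apply eq_of_shared hM he hc
            right; right; right; rw [hc2]; exact Fin.ext h
          rw [this]
        · have h8 : u ≤ e.2 := by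
            simp only [Fin.le_def]
            omega
          have h7 := hcl e he h8
          simp only [Fin.le_def, Fin.lt_def] at *
          omega
      have hf0E : f0 < c.1 := by
        rcases lt_trichotomy f0.val c.1.val with h | h | h
        · exact Fin.lt_def.mpr h
        · exfalso; exact hf0 ⟨c, hc, Or.inl (Fin.ext h)⟩
        · exfalso
          have hf01 : f0 ≤ u1 := by
            simp only [Fin.le_def, Fin.lt_def] at *
            omega
          rcases eq_or_lt_of_le hf01 with heq | hlt'
          · exact hf0 ⟨c, hc, Or.inr (by rw [heq, hc2])⟩
          · obtain ⟨q, hq, h3⟩ := hM.2.2.2 c hc f0 (Fin.lt_def.mpr h)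
              (by rw [hc2]; exact hlt')
            exact hf0 ⟨q, hq, h3⟩
      have hmeas : c.1.val ≤ m := by
        have h9 : c.1.val < (u1 : Fin n).val := hEgt
        omega
      obtain ⟨g, hgfree, hgE, hWEg⟩ := ih c.1 hclE ⟨f0, hf0, hf0E⟩ hmeas
      refine ⟨g, hgfree, lt_trans hgE (lt_trans hEgt huu1), ?_⟩
      intro l g1 g2
      rcases lt_trichotomy l.val c.1.val with h | h | h
      · obtain ⟨q, hq, h3, h4, h5⟩ := hWEg l g1 (Fin.lt_def.mpr h)
        exact ⟨q, hq, h3, h4, lt_trans h5 (lt_trans hEgt huu1)⟩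
      · refine ⟨c, hc, Or.inl (Fin.ext h), hgE, ?_⟩
        rw [hc2]; exact huu1
      rcases lt_trichotomy l.val u1.val with h' | h' | h'
      · obtain ⟨q, hq, h3, h4, h5⟩ := fill_inside hM hc (Fin.lt_def.mpr h)
          (by rw [hc2]; exact Fin.lt_def.mpr h')
        rw [hc2] at h5
        exact ⟨q, hq, h3, lt_trans hgE h4, lt_trans h5 huu1⟩
      · refine ⟨c, hc, Or.inr (by rw [hc2]; exact Fin.ext h'), hgE, ?_⟩
        rw [hc2]; exact huu1
      · exfalso
        simp only [Fin.lt_def] at g2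
        omega
    · refine ⟨u1, h1, huu1, W_adj (by simp only [hu1v]; omega)⟩

end Surgery

section NoSurgery

variable {lam : Fin n → Bool} {M : Finset (Fin n × Fin n)}
variable (hM : IsCupDiagram M) (hOr : OrientedFor lam M)
variable (hNS : ∀ M' : Finset (Fin n × Fin n),
    IsCupDiagram M' → OrientedFor lam M' → M'.card = M.card → M' = M)

include hM hOr hNS

lemma nfOut {a b c d : Fin n} (hab : (a, b) ∈ M) (hcd : (c, d) ∈ M) (hbc : b < c)
    (hW : W M b c) : lam b = lam c := by
  by_contra h
  obtain ⟨M', u1, u2, u3, u4⟩ := swapOut hM hOr hab hcd hbc hW h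
  exact u4 (hNS M' u1 u2 u3)

lemma nfIn {a b c d : Fin n} (had : (a, d) ∈ M) (hbc : (b, c) ∈ M)
    (h1 : a < b) (h2 : c < d) (hW : W M a b) : lam a = lam b := by
  by_contra h
  obtain ⟨M', u1, u2, u3, u4⟩ := swapIn hM hOr had hbc h1 h2 hW h
  exact u4 (hNS M' u1 u2 u3)

lemma nf4 {x u g : Fin n} (hxu : (x, u) ∈ M) (hg : ¬ Endpt M g) (hug : u < g)
    (hW : W M u g) : lam g = lam u := by
  by_contra h
  obtain ⟨M', u1, u2, u3, u4⟩ := surgery4 hM hOr hxu hg hug hW h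
  exact u4 (hNS M' u1 u2 u3)

lemma nf5 {u x g : Fin n} (hux : (u, x) ∈ M) (hg : ¬ Endpt M g) (hgu : g < u)
    (hW : W M g u) : lam g = lam u := by
  by_contra h
  obtain ⟨M', u1, u2, u3, u4⟩ := surgery5 hM hOr hux hg hgu hW h
  exact u4 (hNS M' u1 u2 u3)

/-- Claim R : below any cup of width > 1 there is a directly nested cup. -/
lemma claimR {c : Fin n × Fin n} (hc : c ∈ M) (hw : c.1.val + 1 < c.2.val) :
    ∃ e ∈ M, e.1.val = c.1.val + 1 ∧ e.2.val = c.2.val - 1 := by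
  have hclt := hM.1 c hc
  have hq := c.2.isLt
  have hp1n : c.1.val + 1 < n := by omega
  set p1 : Fin n := ⟨c.1.val + 1, by omega⟩ with hp1def
  set q1 : Fin n := ⟨c.2.val - 1, by omega⟩ with hq1def
  have hp1val : (p1 : Fin n).val = c.1.val + 1 := rfl
  have hq1val : (q1 : Fin n).val = c.2.val - 1 := rfl
  -- the cup at p1
  obtain ⟨c', hc', hend', hb1', hb2'⟩ := fill_inside hM hc (l := p1)
    (by simp only [Fin.lt_def]; omega) (by simp only [Fin.lt_def]; omega)
  have hc'1 : c'.1 = p1 := by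
    rcases hend' with h | h
    · exact h.symm
    · exfalso
      have := hM.1 c' hc'
      simp only [Fin.lt_def, ← h] at this hb1'
      omega
  -- the cup at q1
  obtain ⟨c'', hc'', hend'', hb1'', hb2''⟩ := fill_inside hM hc (l := q1)
    (by simp only [Fin.lt_def]; omega) (by simp only [Fin.lt_def]; omega)
  have hc''2 : c''.2 = q1 := by
    rcases hend'' with h | h
    · exfalso
      have := hM.1 c'' hc''
      simp only [Fin.lt_def, ← h] at this hb2''
      omega
    · exact h.symm
  by_cases hcc : c' = c''
  · refine ⟨c', hc', by rw [hc'1], by rw [hcc, hc''2]⟩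
  -- otherwise c'.2 < c''.1 and we derive a contradiction
  exfalso
  have hd := hM.2.1 c' hc' c'' hc'' hcc
  have hlt' := hM.1 c' hc'
  have hlt'' := hM.1 c'' hc''
  have hyw : c'.2 < c''.1 := by
    rcases lt_trichotomy c'.2.val c''.1.val with h | h | h
    · exact Fin.lt_def.mpr h
    · exact absurd (Fin.ext h) hd.2.2.1
    · exfalso
      -- c''.1 < c'.2 ; c''.1 > c'.1 (both > p, c''.1 ≠ p1 = c'.1)
      have hne1 : c''.1 ≠ c'.1 := fun hcon => hd.1.symm (by rw [hcon])
      have hgt : c'.1 < c''.1 := by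
        simp only [Fin.lt_def, hc'1] at *
        simp only [ne_eq, Fin.ext_iff] at hne1
        have := hb1''
        omega
      have := straddle hM hc' hc'' (Or.inl rfl) hgt (Fin.lt_def.mpr h)
      -- c''.2 < c'.2 but c''.2 = q1 ≥ c'.2
      simp only [Fin.lt_def, hc''2] at this hb2'
      omega
  -- W between c'.2 and c''.1
  have hWyw : W M c'.2 c''.1 := by
    intro l g1 g2
    have hl1 : c.1 < l := by
      simp only [Fin.lt_def, hc'1] at *
      omega
    have hl2 : l < c.2 := by
      simp only [Fin.lt_def, hc''2] at *
      omega
    obtain ⟨e, he, h3, h4, h5⟩ := fill_inside hM hc hl1 hl2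
    have hne1 : e ≠ c' := by
      rintro rfl
      rcases h3 with h3 | h3 <;>
        (rw [h3] at g1 g2; simp only [Fin.lt_def, hc'1] at g1 g2 hlt'; omega)
    have hne2 : e ≠ c'' := by
      rintro rfl
      rcases h3 with h3 | h3 <;>
        (rw [h3] at g1 g2; simp only [Fin.lt_def, hc''2] at g1 g2 hlt''; omega)
    have hde1 := hM.2.1 e he c' hc' hne1
    have hde2 := hM.2.1 e he c'' hc'' hne2
    have S1 : c'.1 < e.1 → e.1 < c'.2 → c'.1 < e.1 ∧ e.2 < c'.2 := fun u1 u2 =>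
      straddle hM hc' he (Or.inl rfl) u1 u2
    have S2 : c'.1 < e.2 → e.2 < c'.2 → c'.1 < e.1 ∧ e.2 < c'.2 := fun u1 u2 =>
      straddle hM hc' he (Or.inr rfl) u1 u2
    have T1 : c''.1 < e.1 → e.1 < c''.2 → c''.1 < e.1 ∧ e.2 < c''.2 := fun u1 u2 =>
      straddle hM hc'' he (Or.inl rfl) u1 u2
    have T2 : c''.1 < e.2 → e.2 < c''.2 → c''.1 < e.1 ∧ e.2 < c''.2 := fun u1 u2 =>
      straddle hM hc'' he (Or.inr rfl) u1 u2
    refine ⟨e, he, h3, ?_, ?_⟩ <;>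
      (rcases h3 with h3 | h3 <;>
        (have helt := hM.1 e he
         simp only [ne_eq, Fin.ext_iff, Fin.lt_def, hc'1, hc''2] at *
         omega))
  have hc'm : (c'.1, c'.2) ∈ M := by rw [Prod.mk.eta]; exact hc'
  have hc''m : (c''.1, c''.2) ∈ M := by rw [Prod.mk.eta]; exact hc''
  have hcm : (c.1, c.2) ∈ M := by rw [Prod.mk.eta]; exact hc
  have e1 : lam c'.2 = lam c''.1 := nfOut hM hOr hNS hc'm hc''m hyw hWyw
  have e2 : lam c.1 = lam c'.1 :=
    nfIn hM hOr hNS hcm hc'm hb1' hb2' (W_adj (by rw [hc'1]))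
  have hWright : W M c''.2 c.2 := by
    rw [hc''2]
    exact W_adj (by simp only [hq1def]; omega)
  have hWpw : W M c.1 c''.1 := w_transfer hM hcm hc''m hb1'' hb2'' hWright
  have e3 : lam c.1 = lam c''.1 := nfIn hM hOr hNS hcm hc''m hb1'' hb2'' hWpw
  have o1 := hOr c' hc'
  exact o1 (by rw [← e2, e3, ← e1])

/-- Rainbow structure: inside any cup, the letter of the left end cannot occur
after a position with the opposite letter. -/
lemma rainbow : ∀ N : ℕ, ∀ c ∈ M, c.2.val - c.1.val ≤ N →
    ∀ x y : Fin n, c.1 ≤ x → x < y → y ≤ c.2 →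
    ¬(lam x ≠ lam c.1 ∧ lam y = lam c.1) := by
  intro N
  induction N with
  | zero =>
    intro c hc hN
    exfalso
    have := hM.1 c hc
    simp only [Fin.lt_def] at this
    omega
  | succ N ih =>
    intro c hc hN x y hx hxy hy
    have hclt := hM.1 c hc
    rintro ⟨w1, w2⟩
    by_cases hadj : c.1.val + 1 = c.2.val
    · -- x = c.1, y = c.2
      have hx1 : x = c.1 := by
        apply Fin.ext
        simp only [Fin.le_def, Fin.lt_def] at *
        omega
      exact w1 (by rw [hx1])
    · have hw : c.1.val + 1 < c.2.val := by
        simp only [Fin.lt_def] at hclt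
        omega
      obtain ⟨e, he, he1, he2⟩ := claimR hM hOr hNS hc hw
      have helt := hM.1 e he
      have hcm : (c.1, c.2) ∈ M := by rw [Prod.mk.eta]; exact hc
      have hem : (e.1, e.2) ∈ M := by rw [Prod.mk.eta]; exact he
      have e2 : lam c.1 = lam e.1 :=
        nfIn hM hOr hNS hcm hem (by simp only [Fin.lt_def]; omega)
          (by simp only [Fin.lt_def]; omega) (W_adj (by omega))
      by_cases hxc : x = c.1
      · exact w1 (by rw [hxc])
      by_cases hyc : y = c.2
      · have := hOr c hc
        rw [hyc] at w2
        exact this w2.symm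
      have hxval : e.1 ≤ x := by
        simp only [Fin.le_def, ne_eq, Fin.ext_iff] at *
        omega
      have hyval : y ≤ e.2 := by
        simp only [Fin.le_def, Fin.lt_def, ne_eq, Fin.ext_iff] at *
        omega
      have hmeas : e.2.val - e.1.val ≤ N := by omega
      exact ih e he hmeas x y hxval hxy hyval ⟨by rw [← e2]; exact w1, by rw [← e2]; exact w2⟩

end NoSurgery

section Support
variable {lam : Fin n → Bool} {M : Finset (Fin n × Fin n)}

lemma closed_step (hM : IsCupDiagram M) {u : Fin n}
    (hcl : ∀ c ∈ M, c.1 ≤ u → c.2 ≤ u) {c' : Fin n × Fin n} (hc' : c' ∈ M)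
    (hstep : c'.1.val = u.val + 1) : ∀ c ∈ M, c.1 ≤ c'.2 → c.2 ≤ c'.2 := by
  intro e he hle
  have hlt' := hM.1 c' hc'
  rcases lt_trichotomy e.1.val c'.1.val with h | h | h
  · have h8 : e.1 ≤ u := by simp only [Fin.le_def]; omega
    have h7 := hcl e he h8
    simp only [Fin.le_def, Fin.lt_def] at *
    omega
  · have : e = c' := eq_of_shared hM he hc' (Or.inl (Fin.ext h))
    rw [this]
  · by_cases hec : e = c'
    · rw [hec]
    have hd := hM.2.1 e he c' hc' hec
    have he2 : e.1 < c'.2 := by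
      simp only [Fin.le_def, Fin.lt_def, ne_eq, Fin.ext_iff] at *
      omega
    have := straddle hM hc' he (Or.inl rfl) (Fin.lt_def.mpr h) he2
    exact le_of_lt this.2

lemma closed_stepL (hM : IsCupDiagram M) {u : Fin n}
    (hcl : ∀ c ∈ M, u ≤ c.2 → u ≤ c.1) {c' : Fin n × Fin n} (hc' : c' ∈ M)
    (hstep : c'.2.val + 1 = u.val) : ∀ c ∈ M, c'.1 ≤ c.2 → c'.1 ≤ c.1 := by
  intro e he hle
  have hlt' := hM.1 c' hc'
  rcases lt_trichotomy e.2.val c'.2.val with h | h | h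
  · by_cases hec : e = c'
    · rw [hec]
    have hd := hM.2.1 e he c' hc' hec
    have he2 : c'.1 < e.2 := by
      simp only [Fin.le_def, Fin.lt_def, ne_eq, Fin.ext_iff] at *
      omega
    have := straddle hM hc' he (Or.inr rfl) he2 (Fin.lt_def.mpr h)
    exact le_of_lt this.1
  · have : e = c' := eq_of_shared hM he hc' (Or.inr (Or.inr (Or.inr (Fin.ext h))))
    rw [this]
  · have h8 : u ≤ e.2 := by simp only [Fin.le_def]; omega
    have h7 := hcl e he h8
    simp only [Fin.le_def, Fin.lt_def] at *
    omega

lemma nb_right (hM : IsCupDiagram M) {O : Fin n × Fin n} (hO : O ∈ M)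
    (hout : ∀ e ∈ M, ¬(e.1 < O.1 ∧ O.2 < e.2)) {q1 : Fin n}
    (hq1 : q1.val = O.2.val + 1) (hq1e : Endpt M q1) : ∃ c' ∈ M, c'.1 = q1 := by
  obtain ⟨c', hc', hend⟩ := hq1e
  rcases hend with h | h
  · exact ⟨c', hc', h.symm⟩
  · exfalso
    have hlt := hM.1 c' hc'
    have h8 : c'.1 ≤ O.2 := by
      simp only [Fin.le_def, Fin.lt_def, ← h] at *
      omega
    have := closed_right hM hO hout c' hc' h8
    simp only [Fin.le_def, ← h] at this
    omega

lemma nb_left (hM : IsCupDiagram M) {O : Fin n × Fin n} (hO : O ∈ M)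
    (hout : ∀ e ∈ M, ¬(e.1 < O.1 ∧ O.2 < e.2)) {p1 : Fin n}
    (hp1 : p1.val + 1 = O.1.val) (hp1e : Endpt M p1) : ∃ c' ∈ M, c'.2 = p1 := by
  obtain ⟨c', hc', hend⟩ := hp1e
  rcases hend with h | h
  · exfalso
    have hlt := hM.1 c' hc'
    have h8 : O.1 ≤ c'.2 := by
      simp only [Fin.le_def, Fin.lt_def, ← h] at *
      omega
    have := closed_left hM hO hout c' hc' h8
    simp only [Fin.le_def, ← h] at this
    omega
  · exact ⟨c', hc', h.symm⟩

lemma free_outside (hM : IsCupDiagram M) {c : Fin n × Fin n} (hc : c ∈ M)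
    {g : Fin n} (hg : ¬ Endpt M g) : ¬(c.1 ≤ g ∧ g ≤ c.2) := by
  rintro ⟨h1, h2⟩
  obtain ⟨e, he, h3, _, _⟩ := cup_of_mem_closed hM hc h1 h2
  exact hg ⟨e, he, h3⟩

end Support

section StructA
variable {lam : Fin n → Bool} {M : Finset (Fin n × Fin n)}
variable (hM : IsCupDiagram M) (hOr : OrientedFor lam M)
variable (hNS : ∀ M' : Finset (Fin n × Fin n),
    IsCupDiagram M' → OrientedFor lam M' → M'.card = M.card → M' = M)

include hM hOr hNS

/-- Structure lemma, case with a free position: a pattern false-true-false is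
impossible. -/
lemma structA
    (hfreeAll : ∀ l : Fin n, ¬ Endpt M l → lam l = false)
    (hmatchT : ∀ l : Fin n, lam l = true → Endpt M l)
    (hfree : ∃ f : Fin n, ¬ Endpt M f)
    {x y z : Fin n} (hxy : x < y) (hyz : y < z)
    (hx : lam x = false) (hy : lam y = true) (hz : lam z = false) : False := by
  obtain ⟨O, hO, hOy1, hOy2, hout⟩ := exists_outermost hM (hmatchT y hy)
  have hOlt := hM.1 O hO
  have hOm : (O.1, O.2) ∈ M := by rw [Prod.mk.eta]; exact hO
  have hOor := hOr O hO
  obtain ⟨f0, hf0⟩ := hfree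
  have hf0out := free_outside hM hO hf0
  cases hP : lam O.1 with
  | true =>
    by_cases hL : ∃ g : Fin n, ¬ Endpt M g ∧ g < O.1
    · -- surgery S5 at O.1
      obtain ⟨g, hgf, hgu, hWg⟩ := chainL hM O.1.val O.1 (closed_left hM hO hout)
        hL (le_refl _)
      have := nf5 hM hOr hNS hOm hgf hgu hWg
      rw [hfreeAll g hgf, hP] at this
      exact Bool.false_ne_true this
    · -- no free to the left of O.1 ; so f0 > O.2
      push_neg at hL
      have hf0gt : O.2 < f0 := by
        have h1 := hL f0 hf0
        rcases lt_trichotomy O.2.val f0.val with h | h | h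
        · exact Fin.lt_def.mpr h
        · exfalso; exact hf0out ⟨by simp only [Fin.le_def]; omega, by simp only [Fin.le_def]; omega⟩
        · exfalso
          exact hf0out ⟨by simp only [Fin.le_def, Fin.lt_def, not_lt] at *; omega,
            by simp only [Fin.le_def]; omega⟩
      have hq1n : O.2.val + 1 < n := by
        have := f0.isLt
        simp only [Fin.lt_def] at hf0gt
        omega
      set q1 : Fin n := ⟨O.2.val + 1, hq1n⟩ with hq1def
      have hq1val : (q1 : Fin n).val = O.2.val + 1 := rfl
      by_cases hq1e : Endpt M q1
      · -- walk right
        obtain ⟨c', hc', hc'1⟩ := nb_right hM hO hout (by rw [hq1def]) hq1e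
        have hc'lt := hM.1 c' hc'
        have hc'm : (c'.1, c'.2) ∈ M := by rw [Prod.mk.eta]; exact hc'
        have eOq1 : lam O.2 = lam c'.1 := by
          apply nfOut hM hOr hNS hOm hc'm
          · rw [hc'1]; simp only [Fin.lt_def]; omega
          · exact W_adj (by rw [hc'1])
        have hlamE : lam c'.2 = true := by
          have := hOr c' hc'
          rw [← eOq1] at this
          revert hOor this hP
          cases lam O.2 <;> cases lam c'.2 <;> simp_all
        -- free beyond c'.2
        have hf0E : c'.2 < f0 := by
          have hout' := free_outside hM hc' hf0
          rcases lt_trichotomy c'.2.val f0.val with h | h | h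
          · exact Fin.lt_def.mpr h
          · exfalso
            exact hout' ⟨by simp only [Fin.le_def]; omega, by simp only [Fin.le_def]; omega⟩
          · exfalso
            have : c'.1 ≤ f0 := by
              simp only [Fin.le_def, Fin.lt_def, hc'1] at *
              omega
            exact hout' ⟨this, by simp only [Fin.le_def]; omega⟩
        have hclE := closed_step hM (closed_right hM hO hout) hc' (by rw [hc'1])
        obtain ⟨g, hgf, hgE, hWg⟩ := chainR hM (n - c'.2.val) c'.2 hclE
          ⟨f0, hf0, hf0E⟩ (le_refl _)
        have := nf4 hM hOr hNS hc'm hgf hgE hWg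
        rw [hfreeAll g hgf, hlamE] at this
        exact Bool.false_ne_true this
      · -- q1 free
        by_cases hP0 : O.1.val = 0
        · -- rainbow contradiction with x < y
          refine rainbow hM hOr hNS (O.2.val - O.1.val) O hO (le_refl _) x y
            (by simp only [Fin.le_def]; omega) hxy hOy2 ⟨?_, ?_⟩
          · rw [hx, hP]; simp
          · rw [hy, hP]
        · -- O.1 - 1 is matched (no free to the left)
          have hp1n : O.1.val - 1 < n := by
            have := O.1.isLt
            omega
          set p1 : Fin n := ⟨O.1.val - 1, hp1n⟩ with hp1def
          have hp1val : (p1 : Fin n).val = O.1.val - 1 := rfl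
          have hp1e : Endpt M p1 := by
            by_contra hcon
            have h9 := hL p1 hcon
            have hv : (p1 : Fin n).val = O.1.val - 1 := rfl
            simp only [Fin.lt_def, not_lt, Fin.le_def] at h9
            omega
          obtain ⟨c'', hc'', hc''2⟩ := nb_left hM hO hout
            (by rw [hp1def]; simp only; omega) hp1e
          have hc''m : (c''.1, c''.2) ∈ M := by rw [Prod.mk.eta]; exact hc''
          have ep1 : lam c''.2 = lam O.1 := by
            apply nfOut hM hOr hNS hc''m hOm
            · rw [hc''2]; simp only [Fin.lt_def]; omega
            · exact W_adj (by rw [hc''2]; omega)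
          have := nf4 hM hOr hNS hc''m hq1e
            (by rw [hc''2]; simp only [Fin.lt_def]; omega)
            (by
              apply W_single hM hO
              · rw [hc''2]; omega
              · rw [hq1def])
          rw [hfreeAll q1 hq1e, ep1, hP] at this
          exact Bool.false_ne_true this
  | false =>
    have hQ : lam O.2 = true := by
      revert hOor hP
      cases lam O.2 <;> simp_all
    by_cases hR : ∃ g : Fin n, ¬ Endpt M g ∧ O.2 < g
    · obtain ⟨g, hgf, hgu, hWg⟩ := chainR hM (n - O.2.val) O.2 (closed_right hM hO hout)
        hR (le_refl _)
      have := nf4 hM hOr hNS hOm hgf hgu hWg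
      rw [hfreeAll g hgf, hQ] at this
      exact Bool.false_ne_true this
    · push_neg at hR
      have hf0lt : f0 < O.1 := by
        have h1 := hR f0 hf0
        rcases lt_trichotomy f0.val O.1.val with h | h | h
        · exact Fin.lt_def.mpr h
        · exfalso; exact hf0out ⟨by simp only [Fin.le_def]; omega, by simp only [Fin.le_def]; omega⟩
        · exfalso
          exact hf0out ⟨by simp only [Fin.le_def]; omega,
            by simp only [Fin.le_def, Fin.lt_def, not_lt] at *; omega⟩
      have hp1pos : 0 < O.1.val := by
        simp only [Fin.lt_def] at hf0lt
        omega
      have hp1n : O.1.val - 1 < n := by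
        have := O.1.isLt
        omega
      set p1 : Fin n := ⟨O.1.val - 1, hp1n⟩ with hp1def
      have hp1val : (p1 : Fin n).val = O.1.val - 1 := rfl
      by_cases hp1e : Endpt M p1
      · -- walk left
        obtain ⟨c'', hc'', hc''2⟩ := nb_left hM hO hout (by simp only [hp1def]; omega) hp1e
        have hc''lt := hM.1 c'' hc''
        have hc''m : (c''.1, c''.2) ∈ M := by rw [Prod.mk.eta]; exact hc''
        have ep1 : lam c''.2 = lam O.1 := by
          apply nfOut hM hOr hNS hc''m hOm
          · rw [hc''2]; simp only [Fin.lt_def, hp1def]; omega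
          · exact W_adj (by rw [hc''2]; simp only [hp1def]; omega)
        have hlamE : lam c''.1 = true := by
          have := hOr c'' hc''
          rw [ep1, hP] at this
          revert this
          cases lam c''.1 <;> simp_all
        have hf0E : f0 < c''.1 := by
          have hout' := free_outside hM hc'' hf0
          rcases lt_trichotomy f0.val c''.1.val with h | h | h
          · exact Fin.lt_def.mpr h
          · exfalso
            exact hout' ⟨by simp only [Fin.le_def]; omega, by simp only [Fin.le_def]; omega⟩
          · exfalso
            have : f0 ≤ c''.2 := by
              simp only [Fin.le_def, Fin.lt_def, hc''2, hp1def] at *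
              omega
            exact hout' ⟨by simp only [Fin.le_def]; omega, this⟩
        have hclE := closed_stepL hM (closed_left hM hO hout) hc''
          (by rw [hc''2]; simp only [hp1def]; omega)
        obtain ⟨g, hgf, hgE, hWg⟩ := chainL hM c''.1.val c''.1 hclE
          ⟨f0, hf0, hf0E⟩ (le_refl _)
        have := nf5 hM hOr hNS hc''m hgf hgE hWg
        rw [hfreeAll g hgf, hlamE] at this
        exact Bool.false_ne_true this
      · -- p1 free
        by_cases hQn : O.2.val = n - 1
        · -- rainbow contradiction with y < z
          have hfin := z.isLt
          refine rainbow hM hOr hNS (O.2.val - O.1.val) O hO (le_refl _) y z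
            hOy1 hyz (by simp only [Fin.le_def]; omega) ⟨?_, ?_⟩
          · rw [hy, hP]; simp
          · rw [hz, hP]
        · -- O.2 + 1 matched
          have hq1n : O.2.val + 1 < n := by
            have := O.2.isLt
            omega
          set q1 : Fin n := ⟨O.2.val + 1, hq1n⟩ with hq1def
          have hq1val : (q1 : Fin n).val = O.2.val + 1 := rfl
          have hq1e : Endpt M q1 := by
            by_contra hcon
            have h9 := hR q1 hcon
            have hv : (q1 : Fin n).val = O.2.val + 1 := rfl
            simp only [Fin.lt_def, not_lt, Fin.le_def] at h9
            omega
          obtain ⟨c', hc', hc'1⟩ := nb_right hM hO hout (by rw [hq1def]) hq1e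
          have hc'm : (c'.1, c'.2) ∈ M := by rw [Prod.mk.eta]; exact hc'
          have eq1 : lam O.2 = lam c'.1 := by
            apply nfOut hM hOr hNS hOm hc'm
            · rw [hc'1]; simp only [Fin.lt_def]; omega
            · exact W_adj (by rw [hc'1])
          have := nf5 hM hOr hNS hc'm hp1e
            (by rw [hc'1]; simp only [Fin.lt_def, hp1def]; omega)
            (by
              apply W_single hM hO
              · simp only [hp1def]; omega
              · rw [hc'1])
          rw [hfreeAll p1 hp1e, ← eq1, hQ] at this
          exact Bool.false_ne_true this

end StructA

section StructB
variable {lam : Fin n → Bool} {M : Finset (Fin n × Fin n)}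
variable (hM : IsCupDiagram M) (hOr : OrientedFor lam M)
variable (hNS : ∀ M' : Finset (Fin n × Fin n),
    IsCupDiagram M' → OrientedFor lam M' → M'.card = M.card → M' = M)

include hM hOr hNS

lemma structB (hall : ∀ l : Fin n, Endpt M l) (hn : 0 < n) :
    (∀ a b c : Fin n, a ≤ b → b ≤ c → lam a = false → lam c = false → lam b = false) ∨
    (∀ a b c : Fin n, a ≤ b → b ≤ c → lam a = true → lam c = true → lam b = true) := by
  classical
  set z0 : Fin n := ⟨0, hn⟩ with hz0
  obtain ⟨O1, hO1, hO11, hO12, hout1⟩ := exists_outermost hM (hall z0)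
  have hO1v : O1.1.val = 0 := by
    simp only [Fin.le_def, hz0] at hO11
    omega
  have hO1lt := hM.1 O1 hO1
  have hO1m : (O1.1, O1.2) ∈ M := by rw [Prod.mk.eta]; exact hO1
  -- rainbow instances
  have hrb1 := rainbow hM hOr hNS (O1.2.val - O1.1.val) O1 hO1 (le_refl _)
  by_cases hend1 : O1.2.val = n - 1
  · -- a single outermost cup covering everything : falses are consecutive
    left
    intro a b c hab hbc ha hc
    by_contra hb
    rw [Bool.not_eq_false] at hb
    cases hL : lam O1.1 with
    | true =>
      have hab' : a < b := by
        rcases eq_or_lt_of_le hab with h | h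
        · rw [h] at ha; rw [ha] at hb; exact absurd hb (by simp)
        · exact h
      refine hrb1 a b (by simp only [Fin.le_def]; omega) hab'
        (by simp only [Fin.le_def]; have := b.isLt; omega) ⟨?_, ?_⟩
      · rw [ha, hL]; simp
      · rw [hb, hL]
    | false =>
      have hbc' : b < c := by
        rcases eq_or_lt_of_le hbc with h | h
        · rw [← h] at hc; rw [hc] at hb; exact absurd hb (by simp)
        · exact h
      refine hrb1 b c (by simp only [Fin.le_def]; omega) hbc'
        (by simp only [Fin.le_def]; have := c.isLt; omega) ⟨?_, ?_⟩
      · rw [hb, hL]; simp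
      · rw [hc, hL]
  · -- there is a second outermost cup
    have hq1n : O1.2.val + 1 < n := by
      have := O1.2.isLt
      omega
    set q1 : Fin n := ⟨O1.2.val + 1, hq1n⟩ with hq1def
    obtain ⟨O2, hO2, hO21, hO22, hout2⟩ := exists_outermost hM (hall q1)
    have hO2lt := hM.1 O2 hO2
    have hO2m : (O2.1, O2.2) ∈ M := by rw [Prod.mk.eta]; exact hO2
    have hO2v : O2.1 = q1 := by
      rcases eq_or_lt_of_le hO21 with h | h
      · exact h
      · exfalso
        have h8 : O2.1 ≤ O1.2 := by
          simp only [Fin.le_def, Fin.lt_def, hq1def] at *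
          omega
        have := closed_right hM hO1 hout1 O2 hO2 h8
        simp only [Fin.le_def, Fin.lt_def, hq1def] at this hO22
        omega
    have heq12 : lam O1.2 = lam O2.1 := by
      apply nfOut hM hOr hNS hO1m hO2m
      · rw [hO2v]; simp only [Fin.lt_def, hq1def]; omega
      · exact W_adj (by rw [hO2v])
    have hrb2 := rainbow hM hOr hNS (O2.2.val - O2.1.val) O2 hO2 (le_refl _)
    by_cases hend2 : O2.2.val = n - 1
    · -- exactly two blocks
      have hO1or := hOr O1 hO1
      have hO2or := hOr O2 hO2
      cases hL : lam O1.1 with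
      | true =>
        left
        intro a b c hab hbc ha hc
        by_contra hb
        rw [Bool.not_eq_false] at hb
        by_cases hbw : b.val ≤ O1.2.val
        · have hab' : a < b := by
            rcases eq_or_lt_of_le hab with h | h
            · rw [h] at ha; rw [ha] at hb; exact absurd hb (by simp)
            · exact h
          refine hrb1 a b (by simp only [Fin.le_def]; omega) hab'
            (by simp only [Fin.le_def]; omega) ⟨?_, ?_⟩
          · rw [ha, hL]; simp
          · rw [hb, hL]
        · have hbc' : b < c := by
            rcases eq_or_lt_of_le hbc with h | h
            · rw [← h] at hc; rw [hc] at hb; exact absurd hb (by simp)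
            · exact h
          have hL2 : lam O2.1 = false := by
            rw [← heq12]
            revert hO1or hL
            cases lam O1.2 <;> simp_all
          refine hrb2 b c ?_ hbc' (by simp only [Fin.le_def]; have := c.isLt; omega) ⟨?_, ?_⟩
          · rw [hO2v]; simp only [Fin.le_def, hq1def]; omega
          · rw [hb, hL2]; simp
          · rw [hc, hL2]
      | false =>
        right
        intro a b c hab hbc ha hc
        by_contra hb
        rw [Bool.not_eq_true] at hb
        by_cases hbw : b.val ≤ O1.2.val
        · have hab' : a < b := by
            rcases eq_or_lt_of_le hab with h | h
            · rw [h] at ha; rw [ha] at hb; exact absurd hb (by simp)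
            · exact h
          refine hrb1 a b (by simp only [Fin.le_def]; omega) hab'
            (by simp only [Fin.le_def]; omega) ⟨?_, ?_⟩
          · rw [ha, hL]; simp
          · rw [hb, hL]
        · have hbc' : b < c := by
            rcases eq_or_lt_of_le hbc with h | h
            · rw [← h] at hc; rw [hc] at hb; exact absurd hb (by simp)
            · exact h
          have hL2 : lam O2.1 = true := by
            rw [← heq12]
            revert hO1or hL
            cases lam O1.2 <;> simp_all
          refine hrb2 b c ?_ hbc' (by simp only [Fin.le_def]; have := c.isLt; omega) ⟨?_, ?_⟩
          · rw [hO2v]; simp only [Fin.le_def, hq1def]; omega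
          · rw [hb, hL2]; simp
          · rw [hc, hL2]
    · -- three blocks: contradiction
      exfalso
      have hq2n : O2.2.val + 1 < n := by
        have := O2.2.isLt
        omega
      set q2 : Fin n := ⟨O2.2.val + 1, hq2n⟩ with hq2def
      obtain ⟨O3, hO3, hO31, hO32, hout3⟩ := exists_outermost hM (hall q2)
      have hO3lt := hM.1 O3 hO3
      have hO3m : (O3.1, O3.2) ∈ M := by rw [Prod.mk.eta]; exact hO3
      have hO3v : O3.1 = q2 := by
        rcases eq_or_lt_of_le hO31 with h | h
        · exact h
        · exfalso
          have h8 : O3.1 ≤ O2.2 := by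
            simp only [Fin.le_def, Fin.lt_def, hq2def] at *
            omega
          have := closed_right hM hO2 hout2 O3 hO3 h8
          simp only [Fin.le_def, Fin.lt_def, hq2def] at this hO32
          omega
      have heq23 : lam O2.2 = lam O3.1 := by
        apply nfOut hM hOr hNS hO2m hO3m
        · rw [hO3v]; simp only [Fin.lt_def, hq2def]; omega
        · exact W_adj (by rw [hO3v])
      have hW13 : W M O1.2 O3.1 := by
        rw [hO3v]
        apply W_single hM hO2
        · rw [hO2v]
        · rw [hq2def]
      have heq13 : lam O1.2 = lam O3.1 := by
        apply nfOut hM hOr hNS hO1m hO3m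
        · have hv2 : (q2 : Fin n).val = O2.2.val + 1 := rfl
          have hv1 : (q1 : Fin n).val = O1.2.val + 1 := rfl
          have hv3 : O2.1.val = (q1 : Fin n).val := by rw [hO2v]
          rw [hO3v]
          simp only [Fin.lt_def] at hO2lt ⊢
          omega
        · exact hW13
      have hO2or := hOr O2 hO2
      exact hO2or (by rw [← heq12, heq13, ← heq23])

end StructB

section Construction
variable {lam : Fin n → Bool}

lemma genUnique {L : Bool} {a c0 : ℕ}
    (hreg : ∀ i : Fin n, lam i = L ↔ (i.val < a ∨ a + c0 ≤ i.val))
    (hn : a + c0 ≤ n) (hbal : a + (n - (a + c0)) ≤ c0) :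
    ∃! M₀ : Finset (Fin n × Fin n),
      IsCupDiagram M₀ ∧ OrientedFor lam M₀ ∧ M₀.card = a + (n - (a + c0)) := by
  classical
  set b := n - (a + c0) with hbdef
  have hac : a ≤ c0 := by omega
  have hbc : b ≤ c0 := by omega
  set M₀ : Finset (Fin n × Fin n) := Finset.univ.filter
    (fun p => (p.1.val < a ∧ p.1.val + p.2.val = 2 * a - 1) ∨
      (a + c0 ≤ p.2.val ∧ p.1.val + p.2.val = 2 * (a + c0) - 1)) with hM₀def
  have hmem : ∀ p : Fin n × Fin n, p ∈ M₀ ↔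
      ((p.1.val < a ∧ p.1.val + p.2.val = 2 * a - 1) ∨
       (a + c0 ≤ p.2.val ∧ p.1.val + p.2.val = 2 * (a + c0) - 1)) := by
    intro p
    simp [hM₀def]
  -- letters from the region description
  have hlamL : ∀ i : Fin n, i.val < a ∨ a + c0 ≤ i.val → lam i = L := fun i h => (hreg i).2 h
  have hlamR : ∀ i : Fin n, a ≤ i.val → i.val < a + c0 → lam i ≠ L := by
    intro i h1 h2 hcon
    have := (hreg i).1 hcon
    omega
  -- basic bounds for members
  have hbounds : ∀ p ∈ M₀, p.1.val < p.2.val ∧ p.2.val < n := by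
    intro p hp
    rw [hmem] at hp
    have h1 := p.1.isLt
    have h2 := p.2.isLt
    omega
  have hcup : IsCupDiagram M₀ := by
    refine ⟨?_, ?_, ?_, ?_⟩
    · intro p hp
      have := hbounds p hp
      simp only [Fin.lt_def]
      omega
    · intro p hp q hq hne
      rw [hmem] at hp hq
      have hb1 := p.1.isLt
      have hb2 := p.2.isLt
      have hb3 := q.1.isLt
      have hb4 := q.2.isLt
      have hne' : ¬(p.1.val = q.1.val ∧ p.2.val = q.2.val) := by
        rintro ⟨u1, u2⟩
        exact hne (Prod.ext (Fin.ext u1) (Fin.ext u2))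
      refine ⟨?_, ?_, ?_, ?_⟩ <;> (simp only [ne_eq, Fin.ext_iff]; omega)
    · intro p hp q hq
      rw [hmem] at hp hq
      have hb2 := p.2.isLt
      have hb4 := q.2.isLt
      simp only [Fin.lt_def]
      omega
    · intro p hp l h1 h2
      rw [hmem] at hp
      have hb2 := p.2.isLt
      have hbl := l.isLt
      simp only [Fin.lt_def] at h1 h2
      rcases hp with ⟨u1, u2⟩ | ⟨u1, u2⟩
      · -- type L
        by_cases hla : l.val < a
        · refine ⟨(l, ⟨2 * a - 1 - l.val, by omega⟩), ?_, Or.inl rfl⟩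
          rw [hmem]
          left
          constructor
          · exact hla
          · simp only
            omega
        · refine ⟨(⟨2 * a - 1 - l.val, by omega⟩, l), ?_, Or.inr rfl⟩
          rw [hmem]
          left
          constructor
          · simp only
            omega
          · simp only
            omega
      · -- type R
        by_cases hla : a + c0 ≤ l.val
        · refine ⟨(⟨2 * (a + c0) - 1 - l.val, by omega⟩, l), ?_, Or.inr rfl⟩
          rw [hmem]
          right
          constructor
          · exact hla
          · simp only
            omega
        · refine ⟨(l, ⟨2 * (a + c0) - 1 - l.val, by omega⟩), ?_, Or.inl rfl⟩
          rw [hmem]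
          right
          constructor
          · simp only
            omega
          · simp only
            omega
    -- oriented
  have hOr₀ : OrientedFor lam M₀ := by
    intro p hp
    rw [hmem] at hp
    have hb2 := p.2.isLt
    rcases hp with ⟨u1, u2⟩ | ⟨u1, u2⟩
    · have e1 : lam p.1 = L := hlamL p.1 (Or.inl u1)
      have e2 : lam p.2 ≠ L := hlamR p.2 (by omega) (by omega)
      rw [e1]
      exact fun h => e2 h.symm
    · have e1 : lam p.2 = L := hlamL p.2 (Or.inr u1)
      have e2 : lam p.1 ≠ L := hlamR p.1 (by omega) (by omega)
      rw [e1]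
      exact fun h => e2 h
  -- cardinality
  have hcard : M₀.card = a + b := by
    have hsplit : M₀ = (Finset.univ.filter
        (fun p : Fin n × Fin n => (p.1.val < a ∧ p.1.val + p.2.val = 2 * a - 1))) ∪
        (Finset.univ.filter
        (fun p : Fin n × Fin n => (a + c0 ≤ p.2.val ∧ p.1.val + p.2.val = 2 * (a + c0) - 1))) := by
      ext p
      rw [hmem]
      simp only [Finset.mem_union, Finset.mem_filter, Finset.mem_univ, true_and]
    have hdisj : Disjoint (Finset.univ.filter
        (fun p : Fin n × Fin n => (p.1.val < a ∧ p.1.val + p.2.val = 2 * a - 1)))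
        (Finset.univ.filter
        (fun p : Fin n × Fin n => (a + c0 ≤ p.2.val ∧ p.1.val + p.2.val = 2 * (a + c0) - 1))) := by
      rw [Finset.disjoint_left]
      intro p hp1 hp2
      simp only [Finset.mem_filter, Finset.mem_univ, true_and] at hp1 hp2
      omega
    have hcL : (Finset.univ.filter
        (fun p : Fin n × Fin n => (p.1.val < a ∧ p.1.val + p.2.val = 2 * a - 1))).card = a := by
      have key : (Finset.univ.filter
          (fun p : Fin n × Fin n => (p.1.val < a ∧ p.1.val + p.2.val = 2 * a - 1))).card =
          (Finset.range a).card := by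
        apply Finset.card_bij (fun p _ => p.1.val)
        · intro p hp
          simp only [Finset.mem_filter, Finset.mem_univ, true_and] at hp
          simp only [Finset.mem_range]
          exact hp.1
        · intro p hp q hq heq
          simp only [Finset.mem_filter, Finset.mem_univ, true_and] at hp hq
          have : p.2.val = q.2.val := by omega
          exact Prod.ext (Fin.ext heq) (Fin.ext this)
        · intro j hj
          simp only [Finset.mem_range] at hj
          refine ⟨(⟨j, by omega⟩, ⟨2 * a - 1 - j, by omega⟩), ?_, rfl⟩
          simp only [Finset.mem_filter, Finset.mem_univ, true_and]
          exact ⟨hj, by show j + (2 * a - 1 - j) = 2 * a - 1; omega⟩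
      rw [Finset.card_range] at key
      exact key
    have hcR : (Finset.univ.filter
        (fun p : Fin n × Fin n => (a + c0 ≤ p.2.val ∧ p.1.val + p.2.val = 2 * (a + c0) - 1))).card = b := by
      have key : (Finset.univ.filter
          (fun p : Fin n × Fin n => (a + c0 ≤ p.2.val ∧ p.1.val + p.2.val = 2 * (a + c0) - 1))).card =
          (Finset.range b).card := by
        apply Finset.card_bij (fun p _ => p.2.val - (a + c0))
        · intro p hp
          simp only [Finset.mem_filter, Finset.mem_univ, true_and] at hp
          simp only [Finset.mem_range]
          have := p.2.isLt
          omega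
        · intro p hp q hq heq
          simp only [Finset.mem_filter, Finset.mem_univ, true_and] at hp hq
          have h1 : p.2.val = q.2.val := by omega
          have h2 : p.1.val = q.1.val := by omega
          exact Prod.ext (Fin.ext h2) (Fin.ext h1)
        · intro j hj
          simp only [Finset.mem_range] at hj
          refine ⟨(⟨a + c0 - 1 - j, by omega⟩, ⟨a + c0 + j, by omega⟩), ?_,
            by show a + c0 + j - (a + c0) = j; omega⟩
          simp only [Finset.mem_filter, Finset.mem_univ, true_and]
          refine ⟨by show a + c0 ≤ a + c0 + j; omega,
            by show (a + c0 - 1 - j) + (a + c0 + j) = 2 * (a + c0) - 1; omega⟩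
      rw [Finset.card_range] at key
      exact key
    rw [hsplit, Finset.card_union_of_disjoint hdisj, hcL, hcR]
  refine ⟨M₀, ⟨hcup, hOr₀, hcard⟩, ?_⟩
  -- uniqueness
  rintro M' ⟨hM', hOr', hcard'⟩
  -- the count of L-letters
  have hLcount : (Finset.univ.filter fun l : Fin n => lam l = L).card = a + b := by
    have hsp : (Finset.univ.filter fun l : Fin n => lam l = L) =
        (Finset.univ.filter fun l : Fin n => 0 ≤ l.val ∧ l.val < a) ∪
        (Finset.univ.filter fun l : Fin n => a + c0 ≤ l.val ∧ l.val < n) := by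
      ext l
      have := l.isLt
      simp only [Finset.mem_union, Finset.mem_filter, Finset.mem_univ, true_and, hreg l]
      omega
    have hdj : Disjoint (Finset.univ.filter fun l : Fin n => 0 ≤ l.val ∧ l.val < a)
        (Finset.univ.filter fun l : Fin n => a + c0 ≤ l.val ∧ l.val < n) := by
      rw [Finset.disjoint_left]
      intro l h1 h2
      simp only [Finset.mem_filter, Finset.mem_univ, true_and] at h1 h2
      omega
    rw [hsp, Finset.card_union_of_disjoint hdj, card_val_interval 0 a (by omega),
      card_val_interval (a + c0) n (le_refl _)]
    omega
  have hsub : M' ⊆ M₀ := by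
    intro p hp
    have hor := hOr' p hp
    have hplt := hM'.1 p hp
    have hb1 := p.1.isLt
    have hb2 := p.2.isLt
    simp only [Fin.lt_def] at hplt
    rw [hmem]
    have hbalp := balance hM' hOr' hp L
    by_cases hL1 : lam p.1 = L
    · left
      have hp1a : p.1.val < a := by
        rcases (hreg p.1).1 hL1 with h | h
        · exact h
        · exfalso
          have : lam p.2 = L := hlamL p.2 (Or.inr (by omega))
          rw [hL1, this] at hor
          exact hor rfl
      have hp2r : a ≤ p.2.val ∧ p.2.val < a + c0 := by
        constructor
        · by_contra hcon
          push_neg at hcon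
          have : lam p.2 = L := hlamL p.2 (Or.inl (by omega))
          rw [hL1, this] at hor
          exact hor rfl
        · by_contra hcon
          push_neg at hcon
          have : lam p.2 = L := hlamL p.2 (Or.inr (by omega))
          rw [hL1, this] at hor
          exact hor rfl
      refine ⟨hp1a, ?_⟩
      have e1 : (Finset.univ.filter fun l : Fin n => p.1 ≤ l ∧ l ≤ p.2 ∧ lam l = L) =
          (Finset.univ.filter fun l : Fin n => p.1.val ≤ l.val ∧ l.val < a) := by
        ext l
        simp only [Finset.mem_filter, Finset.mem_univ, true_and, Fin.le_def, hreg l]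
        omega
      have e2 : (Finset.univ.filter fun l : Fin n => p.1 ≤ l ∧ l ≤ p.2 ∧ lam l = !L) =
          (Finset.univ.filter fun l : Fin n => a ≤ l.val ∧ l.val < p.2.val + 1) := by
        ext l
        have hble := l.isLt
        have hno : (lam l = !L) ↔ ¬ (lam l = L) := by
          cases lam l <;> cases L <;> simp
        simp only [Finset.mem_filter, Finset.mem_univ, true_and, Fin.le_def, hno, hreg l]
        omega
      rw [e1, e2, card_val_interval p.1.val a (by omega),
        card_val_interval a (p.2.val + 1) (by omega)] at hbalp
      omega
    · right
      have hL2 : lam p.2 = L := by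
        revert hor hL1
        cases h1 : lam p.1 <;> cases h2 : lam p.2 <;> cases L <;> simp
      have hp2r : a + c0 ≤ p.2.val := by
        rcases (hreg p.2).1 hL2 with h | h
        · exfalso
          exact hL1 (hlamL p.1 (Or.inl (by omega)))
        · exact h
      have hp1m : a ≤ p.1.val ∧ p.1.val < a + c0 := by
        by_contra hcon
        push_neg at hcon
        exact hL1 (hlamL p.1 (by omega))
      refine ⟨hp2r, ?_⟩
      have e1 : (Finset.univ.filter fun l : Fin n => p.1 ≤ l ∧ l ≤ p.2 ∧ lam l = L) =
          (Finset.univ.filter fun l : Fin n => a + c0 ≤ l.val ∧ l.val < p.2.val + 1) := by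
        ext l
        simp only [Finset.mem_filter, Finset.mem_univ, true_and, Fin.le_def, hreg l]
        omega
      have e2 : (Finset.univ.filter fun l : Fin n => p.1 ≤ l ∧ l ≤ p.2 ∧ lam l = !L) =
          (Finset.univ.filter fun l : Fin n => p.1.val ≤ l.val ∧ l.val < a + c0) := by
        ext l
        have hble := l.isLt
        have hno : (lam l = !L) ↔ ¬ (lam l = L) := by
          cases lam l <;> cases L <;> simp
        simp only [Finset.mem_filter, Finset.mem_univ, true_and, Fin.le_def, hno, hreg l]
        omega
      rw [e1, e2, card_val_interval (a + c0) (p.2.val + 1) (by omega),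
        card_val_interval p.1.val (a + c0) (by omega)] at hbalp
      omega
  exact Finset.eq_of_subset_of_card_le hsub (by rw [hcard, hcard'])

end Construction

section Glue
variable {lam : Fin n → Bool}

lemma count_false {k : ℕ}
    (hlam : (Finset.univ.filter (fun i => lam i = true)).card = k) :
    (Finset.univ.filter (fun i : Fin n => lam i = false)).card = n - k ∧ k ≤ n := by
  classical
  have h := Finset.card_filter_add_card_filter_not
    (s := (Finset.univ : Finset (Fin n))) (p := fun i => lam i = true)
  have he : (Finset.univ.filter (fun i : Fin n => ¬ lam i = true)) =
      (Finset.univ.filter (fun i : Fin n => lam i = false)) := by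
    ext i
    simp [Bool.not_eq_true]
  rw [he, hlam] at h
  have hc : (Finset.univ : Finset (Fin n)).card = n := by
    rw [Finset.card_univ, Fintype.card_fin]
  rw [hc] at h
  omega

lemma admissible_auto {k : ℕ} {M : Finset (Fin n × Fin n)}
    (hM : IsCupDiagram M) (hOr : OrientedFor lam M)
    (hlam : (Finset.univ.filter (fun i => lam i = true)).card = k)
    (hcard : M.card = min k (n - k)) : AdmissibleFor lam M := by
  obtain ⟨hcf, hkn⟩ := count_false hlam
  rintro i j hij hfi hfj ⟨h1, h2⟩
  by_cases hk : k ≤ n - k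
  · have hall := all_matched hM hOr true (by rw [hcard, min_eq_left hk, ← hlam])
    have := not_free_iff.2 (hall j h2)
    exact this hfj
  · have hk' : n - k ≤ k := le_of_not_ge hk
    have hall := all_matched hM hOr false (by rw [hcard, min_eq_right hk', ← hcf])
    have := not_free_iff.2 (hall i h1)
    exact this hfi

/-- the two forms of the unique-existence statement agree -/
lemma exun_equiv {k : ℕ}
    (hlam : (Finset.univ.filter (fun i => lam i = true)).card = k) :
    ((∃! M : Finset (Fin n × Fin n),
        IsCupDiagram M ∧ OrientedFor lam M ∧ AdmissibleFor lam M ∧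
        M.card = min k (n - k)) ↔
     (∃! M : Finset (Fin n × Fin n),
        IsCupDiagram M ∧ OrientedFor lam M ∧ M.card = min k (n - k))) := by
  apply existsUnique_congr
  intro M
  constructor
  · rintro ⟨h1, h2, _, h4⟩
    exact ⟨h1, h2, h4⟩
  · rintro ⟨h1, h2, h4⟩
    exact ⟨h1, h2, admissible_auto h1 h2 hlam h4, h4⟩

lemma mainLemma {k : ℕ} (hk1 : 1 ≤ k) (hkm : k ≤ n - k)
    (hlam : (Finset.univ.filter (fun i => lam i = true)).card = k) :
    (∃! M : Finset (Fin n × Fin n),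
        IsCupDiagram M ∧ OrientedFor lam M ∧ AdmissibleFor lam M ∧
        M.card = min k (n - k)) ↔
      ((k ≤ n - k ∧ ∀ a b c : Fin n, a ≤ b → b ≤ c →
          lam a = false → lam c = false → lam b = false) ∨
        (n - k ≤ k ∧ ∀ a b c : Fin n, a ≤ b → b ≤ c →
          lam a = true → lam c = true → lam b = true)) := by
  classical
  obtain ⟨hcf, hkn⟩ := count_false hlam
  have hminval : min k (n - k) = k := min_eq_left hkm
  have hnpos : 0 < n := by omega
  rw [exun_equiv hlam]
  constructor
  · rintro ⟨M, ⟨hM, hOr, hcard⟩, huniq⟩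
    have hNS : ∀ M' : Finset (Fin n × Fin n),
        IsCupDiagram M' → OrientedFor lam M' → M'.card = M.card → M' = M := by
      intro M' h1 h2 h3
      exact huniq M' ⟨h1, h2, by rw [h3, hcard]⟩
    have hmatchT : ∀ l : Fin n, lam l = true → Endpt M l :=
      all_matched hM hOr true (by rw [hcard, hminval, ← hlam])
    have hfreeAll : ∀ l : Fin n, ¬ Endpt M l → lam l = false := by
      intro l hl
      cases h : lam l
      · rfl
      · exact absurd (hmatchT l h) hl
    by_cases hCf : ∀ a b c : Fin n, a ≤ b → b ≤ c →
        lam a = false → lam c = false → lam b = false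
    · exact Or.inl ⟨hkm, hCf⟩
    · push_neg at hCf
      obtain ⟨x, y, z, hxy, hyz, hx, hz, hy⟩ := hCf
      have hy2 : lam y = true := by revert hy; cases lam y <;> simp
      clear hy
      have hy := hy2
      have hxy' : x < y := by
        rcases eq_or_lt_of_le hxy with h | h
        · rw [h] at hx; rw [hx] at hy; exact absurd hy (by simp)
        · exact h
      have hyz' : y < z := by
        rcases eq_or_lt_of_le hyz with h | h
        · rw [← h] at hz; rw [hz] at hy; exact absurd hy (by simp)
        · exact h
      by_cases hfree : ∃ f : Fin n, ¬ Endpt M f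
      · exact (structA hM hOr hNS hfreeAll hmatchT hfree hxy' hyz' hx hy hz).elim
      · push_neg at hfree
        rcases structB hM hOr hNS hfree hnpos with h | h
        · exfalso
          have h9 := h x y z hxy hyz hx hz
          rw [h9] at hy
          exact Bool.false_ne_true hy
        · -- all matched ⇒ n - k = k
          have hfm : (Finset.univ.filter fun l : Fin n => lam l = false ∧ Endpt M l) =
              (Finset.univ.filter fun l : Fin n => lam l = false) := by
            ext l
            simp only [Finset.mem_filter, Finset.mem_univ, true_and]
            exact ⟨fun h => h.1, fun h => ⟨h, hfree l⟩⟩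
          have hcmf := card_matched_eq hM hOr false
          rw [hfm, hcf, hcard, hminval] at hcmf
          exact Or.inr ⟨by omega, h⟩
  · rintro (⟨_, hCf⟩ | ⟨hmk, hCt⟩)
    · -- falses form an interval: construct
      have hFne : (Finset.univ.filter (fun i : Fin n => lam i = false)).Nonempty := by
        rw [← Finset.card_pos, hcf]
        omega
      set F := Finset.univ.filter (fun i : Fin n => lam i = false) with hFdef
      set a := (F.min' hFne).val with hadef
      set l2 := (F.max' hFne).val with hl2def
      have hmemF : ∀ i : Fin n, i ∈ F ↔ lam i = false := by
        intro i
        simp [hFdef]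
      have hinterval : ∀ i : Fin n, a ≤ i.val → i.val ≤ l2 → lam i = false := by
        intro i h1 h2
        refine hCf (F.min' hFne) i (F.max' hFne) ?_ ?_ ?_ ?_
        · exact h1
        · exact h2
        · exact (hmemF _).1 (F.min'_mem hFne)
        · exact (hmemF _).1 (F.max'_mem hFne)
      have hFeq : F = Finset.univ.filter (fun i : Fin n => a ≤ i.val ∧ i.val < l2 + 1) := by
        ext i
        simp only [Finset.mem_filter, Finset.mem_univ, true_and, ← hmemF i]
        constructor
        · intro hi
          exact ⟨F.min'_le i hi, by have := F.le_max' i hi; simp only [Fin.le_def] at this ⊢; omega⟩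
        · rintro ⟨h1, h2⟩
          rw [hmemF]
          exact hinterval i h1 (by omega)
      have hl2n : l2 < n := (F.max' hFne).isLt
      have hcount : l2 + 1 - a = n - k := by
        have h9 : F.card = l2 + 1 - a := by
          rw [hFeq, card_val_interval a (l2 + 1) (by omega)]
        omega
      have hanb : a + (n - k) = l2 + 1 := by
        have : a ≤ l2 := by
          have := F.min'_le _ (F.max'_mem hFne)
          exact this
        omega
      have hreg : ∀ i : Fin n, lam i = true ↔ (i.val < a ∨ a + (n - k) ≤ i.val) := by
        intro i
        constructor
        · intro hi
          by_contra hcon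
          push_neg at hcon
          have := hinterval i hcon.1 (by omega)
          rw [hi] at this
          exact absurd this (by simp)
        · intro hi
          cases h : lam i
          · exfalso
            have : i ∈ F := (hmemF i).2 h
            have h1 := F.min'_le i this
            have h2 := F.le_max' i this
            simp only [Fin.le_def] at h1 h2
            omega
          · rfl
      have := genUnique (lam := lam) (L := true) (a := a) (c0 := n - k) hreg
        (by omega) (by omega)
      have harith : a + (n - (a + (n - k))) = k := by omega
      rw [harith] at this
      rw [hminval]
      exact this
    · -- trues form an interval (and k = n - k)
      have hkeq : k = n - k := le_antisymm hkm hmk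
      have hTne : (Finset.univ.filter (fun i : Fin n => lam i = true)).Nonempty := by
        rw [← Finset.card_pos, hlam]
        omega
      set F := Finset.univ.filter (fun i : Fin n => lam i = true) with hFdef
      set a := (F.min' hTne).val with hadef
      set l2 := (F.max' hTne).val with hl2def
      have hmemF : ∀ i : Fin n, i ∈ F ↔ lam i = true := by
        intro i
        simp [hFdef]
      have hinterval : ∀ i : Fin n, a ≤ i.val → i.val ≤ l2 → lam i = true := by
        intro i h1 h2
        refine hCt (F.min' hTne) i (F.max' hTne) h1 h2 ?_ ?_
        · exact (hmemF _).1 (F.min'_mem hTne)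
        · exact (hmemF _).1 (F.max'_mem hTne)
      have hFeq : F = Finset.univ.filter (fun i : Fin n => a ≤ i.val ∧ i.val < l2 + 1) := by
        ext i
        simp only [Finset.mem_filter, Finset.mem_univ, true_and, ← hmemF i]
        constructor
        · intro hi
          exact ⟨F.min'_le i hi, by have := F.le_max' i hi; simp only [Fin.le_def] at this ⊢; omega⟩
        · rintro ⟨h1, h2⟩
          rw [hmemF]
          exact hinterval i h1 (by omega)
      have hl2n : l2 < n := (F.max' hTne).isLt
      have hcount : l2 + 1 - a = k := by
        have h9 : F.card = l2 + 1 - a := by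
          rw [hFeq, card_val_interval a (l2 + 1) (by omega)]
        have h10 : F.card = k := hlam
        omega
      have hanb : a + k = l2 + 1 := by
        have : a ≤ l2 := by
          have := F.min'_le _ (F.max'_mem hTne)
          exact this
        omega
      have hreg : ∀ i : Fin n, lam i = false ↔ (i.val < a ∨ a + k ≤ i.val) := by
        intro i
        constructor
        · intro hi
          by_contra hcon
          push_neg at hcon
          have := hinterval i hcon.1 (by omega)
          rw [hi] at this
          exact absurd this (by simp)
        · intro hi
          cases h : lam i
          · rfl
          · exfalso
            have : i ∈ F := (hmemF i).2 h
            have h1 := F.min'_le i this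
            have h2 := F.le_max' i this
            simp only [Fin.le_def] at h1 h2
            omega
      have := genUnique (lam := lam) (L := false) (a := a) (c0 := k) hreg
        (by omega) (by omega)
      have harith : a + (n - (a + k)) = n - k := by omega
      rw [harith] at this
      rw [hminval, hkeq]
      exact this

end Glue

end CupProof

open CupProof in
/-- For a word `λ` with exactly `k` letters `∧` (`true`), there is exactly one cup
diagram oriented and admissible for `λ` with `min(k, n-k)` cups if and only if
either `k ≤ n-k` and the positions of the `∨`'s (`false`) are consecutive, or
`n-k ≤ k` and the positions of the `∧`'s (`true`) are consecutive. -/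
theorem stmt16 (n k : ℕ) (hn : 2 ≤ n) (hk1 : 1 ≤ k) (hk2 : k ≤ n - 1)
    (lam : Fin n → Bool)
    (hlam : (Finset.univ.filter (fun i => lam i = true)).card = k) :
    (∃! M : Finset (Fin n × Fin n),
        IsCupDiagram M ∧ OrientedFor lam M ∧ AdmissibleFor lam M ∧
        M.card = min k (n - k)) ↔
      ((k ≤ n - k ∧ ∀ a b c : Fin n, a ≤ b → b ≤ c →
          lam a = false → lam c = false → lam b = false) ∨
        (n - k ≤ k ∧ ∀ a b c : Fin n, a ≤ b → b ≤ c →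
          lam a = true → lam c = true → lam b = true)) := by
  classical
  by_cases hk : k ≤ n - k
  · exact mainLemma hk1 hk hlam
  · push_neg at hk
    have hkn : k ≤ n := (count_false hlam).2
    set lam' : Fin n → Bool := fun i => ! lam i with hlam'def
    have hlam' : (Finset.univ.filter (fun i => lam' i = true)).card = n - k := by
      have he : (Finset.univ.filter (fun i : Fin n => lam' i = true)) =
          (Finset.univ.filter (fun i : Fin n => lam i = false)) := by
        ext i
        simp [hlam'def]
      rw [he]
      exact (count_false hlam).1
    have hk1' : 1 ≤ n - k := by omega
    have hkm' : n - k ≤ n - (n - k) := by omega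
    have hmain := mainLemma (lam := lam') hk1' hkm' hlam'
    have hminq : min (n - k) (n - (n - k)) = min k (n - k) := by
      have h9 : n - (n - k) = k := by omega
      rw [h9, Nat.min_comm]
    have hor : ∀ M : Finset (Fin n × Fin n), OrientedFor lam' M ↔ OrientedFor lam M := by
      intro M
      constructor <;> intro h p hp <;> have h9 := h p hp
      · intro hcon
        apply h9
        show (!(lam p.1)) = (!(lam p.2))
        rw [hcon]
      · intro hcon
        apply h9
        have h10 : (!(lam p.1)) = (!(lam p.2)) := hcon
        cases hv1 : lam p.1 <;> cases hv2 : lam p.2 <;> simp_all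
    have hLHS : (∃! M : Finset (Fin n × Fin n),
        IsCupDiagram M ∧ OrientedFor lam M ∧ AdmissibleFor lam M ∧
        M.card = min k (n - k)) ↔
        (∃! M : Finset (Fin n × Fin n),
        IsCupDiagram M ∧ OrientedFor lam' M ∧ AdmissibleFor lam' M ∧
        M.card = min (n - k) (n - (n - k))) := by
      rw [exun_equiv hlam, exun_equiv hlam']
      apply existsUnique_congr
      intro M
      rw [hminq, hor M]
    constructor
    · intro h
      have h2 := hmain.mp (hLHS.mp h)
      rcases h2 with ⟨h3, h4⟩ | ⟨h3, h4⟩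
      · right
        refine ⟨by omega, ?_⟩
        intro a b c u1 u2 u3 u4
        have := h4 a b c u1 u2 (by simp [hlam'def, u3]) (by simp [hlam'def, u4])
        simpa [hlam'def] using this
      · exfalso
        omega
    · intro h
      apply hLHS.mpr
      apply hmain.mpr
      rcases h with ⟨h3, _⟩ | ⟨h3, h4⟩
      · exfalso; omega
      · left
        refine ⟨by omega, ?_⟩
        intro a b c u1 u2 u3 u4
        have := h4 a b c u1 u2 (by simpa [hlam'def] using u3) (by simpa [hlam'def] using u4)
        simp [hlam'def, this]
end

section
/- Let μ and ν be compositions of n (finite lists of positive integers summing to n) having the same underlying partition, i.e. the multisets of parts of μ and of ν coincide. Then there exists a permutation w of {1,…,n} such that for every block X_i of μ there is a block Y_j of ν with |X_i| = |Y_j| and w maps X_i onto Y_j preserving the natural order of the elements; and for every such w one has w·G_μ = G_ν·w as subsets of S_n. -/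
/-- `InBlock μ i x` says that the (0-indexed) position `x` lies in the `i`-th block
of the composition `μ`, i.e. `μ₀ + ⋯ + μ_{i-1} ≤ x < μ₀ + ⋯ + μ_i`. -/
def InBlock (μ : List ℕ) (i : ℕ) (x : ℕ) : Prop :=
  (μ.take i).sum ≤ x ∧ x < (μ.take (i + 1)).sum

/-- `BlockOrderMap n μ ν w` says that for every block `X_i` of `μ` there is a block
`Y_j` of `ν` of the same size such that `w` maps `X_i` into `Y_j` preserving the
natural order of the elements (hence onto `Y_j`, the sizes being equal).
For `μ = ν` this is the defining property of the group `G_μ`. -/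
def BlockOrderMap (n : ℕ) (μ ν : List ℕ) (w : Equiv.Perm (Fin n)) : Prop :=
  ∀ i : ℕ, i < μ.length → ∃ j : ℕ, j < ν.length ∧ ν.getD j 0 = μ.getD i 0 ∧
    (∀ x : Fin n, InBlock μ i x.val → InBlock ν j (w x).val) ∧
    (∀ x y : Fin n, InBlock μ i x.val → InBlock μ i y.val → x < y → w x < w y)

lemma sum_take_mono (μ : List ℕ) {a b : ℕ} (h : a ≤ b) :
    (μ.take a).sum ≤ (μ.take b).sum := by
  conv_rhs => rw [← List.take_append_drop a (μ.take b)]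
  rw [List.take_take, min_eq_left h, List.sum_append]
  exact Nat.le_add_right _ _

lemma sum_take_le (μ : List ℕ) (a : ℕ) : (μ.take a).sum ≤ μ.sum := by
  conv_rhs => rw [← List.take_append_drop a μ]
  rw [List.sum_append]; exact Nat.le_add_right _ _

lemma inBlock_unique {μ : List ℕ} {i j x : ℕ} (hi : InBlock μ i x) (hj : InBlock μ j x) :
    i = j := by
  by_contra hne
  rcases Nat.lt_or_ge i j with h | h
  · exact absurd (lt_of_lt_of_le hi.2 (le_trans (sum_take_mono μ h) hj.1)) (lt_irrefl x)
  · have h' : j < i := lt_of_le_of_ne h (Ne.symm hne)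
    exact absurd (lt_of_lt_of_le hj.2 (le_trans (sum_take_mono μ h') hi.1)) (lt_irrefl x)

lemma inBlock_exists {μ : List ℕ} {x : ℕ} (hx : x < μ.sum) :
    ∃ i, i < μ.length ∧ InBlock μ i x := by
  induction μ generalizing x with
  | nil => simp at hx
  | cons a t ih =>
    by_cases h : x < a
    · exact ⟨0, by simp, by simpa [InBlock] using h⟩
    · push_neg at h
      have hx' : x - a < t.sum := by simp [List.sum_cons] at hx; omega
      obtain ⟨i, hi, h1, h2⟩ := ih hx'
      refine ⟨i + 1, by simpa using hi, ?_, ?_⟩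
      · simpa [List.take_cons, List.sum_cons] using by omega
      · simp only [List.take_succ_cons, List.sum_cons]
        omega

lemma mono_ge {g : ℕ → ℕ} {m : ℕ}
    (hmono : ∀ s t, s < t → t < m → g s < g t) : ∀ t < m, t ≤ g t := by
  intro t
  induction t with
  | zero => intro _; exact Nat.zero_le _
  | succ k ih =>
    intro hk
    have h1 : k ≤ g k := ih (by omega)
    have h2 : g k < g (k+1) := hmono k (k+1) (by omega) hk
    omega

lemma mono_eq {g : ℕ → ℕ} {m : ℕ} (hlt : ∀ t < m, g t < m)
    (hmono : ∀ s t, s < t → t < m → g s < g t) : ∀ t < m, g t = t := by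
  intro t ht
  have h1 : t ≤ g t := mono_ge hmono t ht
  have h2 : g t ≤ t := by
    have key := mono_ge (g := fun t => m - 1 - g (m - 1 - t)) (m := m) ?_ (m - 1 - t) (by omega)
    · have hg : g (m - 1 - (m - 1 - t)) = g t := by congr 1; omega
      have := hlt t ht
      have h3 : g (m-1-(m-1-t)) < m := by rw [hg]; omega
      omega
    · intro s u hsu hum
      have e1 : m - 1 - u < m - 1 - s := by omega
      have e2 : m - 1 - s < m := by omega
      show m - 1 - g (m - 1 - s) < m - 1 - g (m - 1 - u)
      have := hmono _ _ e1 e2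
      have l1 : g (m - 1 - s) < m := hlt _ (by omega)
      have l2 : g (m - 1 - u) < m := hlt _ (by omega)
      omega
  omega

lemma block_formula {n : ℕ} {μ ν : List ℕ} {w : Equiv.Perm (Fin n)} {i j : ℕ}
    (hμsum : μ.sum = n) (hi : i < μ.length) (hj : j < ν.length)
    (hsize : ν.getD j 0 = μ.getD i 0)
    (hmap : ∀ x : Fin n, InBlock μ i x.val → InBlock ν j (w x).val)
    (hmono : ∀ x y : Fin n, InBlock μ i x.val → InBlock μ i y.val → x < y → w x < w y) :
    ∀ x : Fin n, InBlock μ i x.val →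
      (w x).val = (ν.take j).sum + (x.val - (μ.take i).sum) := by
  obtain ⟨a, ha⟩ : ∃ a, (μ.take i).sum = a := ⟨_, rfl⟩
  obtain ⟨b, hb⟩ : ∃ b, (ν.take j).sum = b := ⟨_, rfl⟩
  obtain ⟨m, hm⟩ : ∃ m, μ.getD i 0 = m := ⟨_, rfl⟩
  rw [ha, hb]
  have hsucc : (μ.take (i+1)).sum = a + m := by
    rw [List.sum_take_succ μ i hi, ← List.getD_eq_getElem μ 0 hi, ha, hm]
  have hsuccν : (ν.take (j+1)).sum = b + m := by
    rw [List.sum_take_succ ν j hj, ← List.getD_eq_getElem ν 0 hj, hsize, hb, hm]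
  have hn : ∀ t, t < m → a + t < n := fun t ht => by
    have := sum_take_le μ (i+1); omega
  have hblk : ∀ t (ht : t < m), InBlock μ i (a + t) := fun t ht =>
    ⟨by rw [ha]; exact Nat.le_add_right _ _, by omega⟩
  set g : ℕ → ℕ := fun t => if h : a + t < n then (w ⟨a+t, h⟩).val - b else 0 with hg
  have hwrange : ∀ t (ht : t < m), b ≤ (w ⟨a+t, hn t ht⟩).val ∧ (w ⟨a+t, hn t ht⟩).val < b + m := by
    intro t ht
    have h2 := hmap ⟨a+t, hn t ht⟩ (hblk t ht)
    obtain ⟨h3, h4⟩ := h2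
    rw [hb] at h3
    constructor
    · exact h3
    · omega
  have hlt : ∀ t < m, g t < m := by
    intro t ht
    have hr := hwrange t ht
    simp only [hg, dif_pos (hn t ht)]
    omega
  have hgm : ∀ s t, s < t → t < m → g s < g t := by
    intro s t hst htm
    have hs := hn s (by omega); have ht := hn t htm
    have hr1 := hwrange s (by omega); have hr2 := hwrange t htm
    have hlt2 : (w ⟨a+s, hs⟩ : Fin n) < w ⟨a+t, ht⟩ :=
      hmono _ _ (hblk s (by omega)) (hblk t htm) (by simp [Fin.lt_def]; omega)
    rw [Fin.lt_def] at hlt2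
    simp only [hg, dif_pos hs, dif_pos ht]
    omega
  have key := mono_eq hlt hgm
  intro x hx
  obtain ⟨hx1, hx2⟩ := hx
  rw [ha] at hx1
  have hxm : x.val - a < m := by omega
  have hxa : a + (x.val - a) = x.val := by omega
  have hfin : (⟨a + (x.val - a), hn _ hxm⟩ : Fin n) = x := by
    ext; simp [hxa]
  have := key (x.val - a) hxm
  simp only [hg, dif_pos (hn _ hxm), hfin] at this
  have hr := hmap x ⟨by rw [ha]; exact hx1, hx2⟩
  have hr1 := hr.1
  rw [hb] at hr1
  omega

lemma bom_comp {n : ℕ} {μ ν ρ : List ℕ} {w v : Equiv.Perm (Fin n)}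
    (hw : BlockOrderMap n μ ν w) (hv : BlockOrderMap n ν ρ v) :
    BlockOrderMap n μ ρ (v * w) := by
  intro i hi
  obtain ⟨j, hj, hs1, hm1, ho1⟩ := hw i hi
  obtain ⟨k, hk, hs2, hm2, ho2⟩ := hv j hj
  refine ⟨k, hk, hs2.trans hs1, fun x hx => hm2 _ (hm1 x hx), fun x y hx hy hxy => ?_⟩
  exact ho2 _ _ (hm1 x hx) (hm1 y hy) (ho1 x y hx hy hxy)

lemma bom_inv {n : ℕ} {μ ν : List ℕ} {w : Equiv.Perm (Fin n)}
    (hνpos : ∀ x ∈ ν, 0 < x) (hμsum : μ.sum = n) (hνsum : ν.sum = n)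
    (hw : BlockOrderMap n μ ν w) : BlockOrderMap n ν μ w⁻¹ := by
  intro j hj
  have hjm : 0 < ν.getD j 0 := by
    rw [List.getD_eq_getElem ν 0 hj]; exact hνpos _ (List.getElem_mem hj)
  have hsuccν : (ν.take (j+1)).sum = (ν.take j).sum + ν.getD j 0 := by
    rw [List.sum_take_succ ν j hj, List.getD_eq_getElem ν 0 hj]
  have hbn : (ν.take j).sum < n := by
    have := sum_take_le ν (j+1); omega
  set y0 : Fin n := ⟨(ν.take j).sum, hbn⟩ with hy0
  have hy0blk : InBlock ν j y0.val := ⟨le_refl _, by simp [hy0]; omega⟩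
  set x0 : Fin n := w⁻¹ y0 with hx0
  obtain ⟨i, hi, hx0blk⟩ := inBlock_exists (μ := μ) (x := x0.val) (by rw [hμsum]; exact x0.isLt)
  obtain ⟨j', hj', hsize, hmap, hmono⟩ := hw i hi
  have hwx0 : w x0 = y0 := by rw [hx0]; exact w.apply_symm_apply y0
  have hj'j : j' = j := inBlock_unique (by rw [← hwx0] at hy0blk ⊢; exact hmap x0 hx0blk) hy0blk
  rw [hj'j] at hsize
  rw [hj'j] at hmap
  have hform := block_formula hμsum hi hj hsize hmap hmono
  have hsuccμ : (μ.take (i+1)).sum = (μ.take i).sum + μ.getD i 0 := by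
    rw [List.sum_take_succ μ i hi, List.getD_eq_getElem μ 0 hi]
  have hx0a : x0.val = (μ.take i).sum := by
    have h1 := hform x0 hx0blk
    rw [hwx0] at h1
    have := hx0blk.1
    simp [hy0] at h1
    omega
  have hmain : ∀ y : Fin n, InBlock ν j y.val → InBlock μ i (w⁻¹ y).val := by
    intro y hy
    have htm : y.val - (ν.take j).sum < ν.getD j 0 := by have := hy.2; omega
    have hxtlt : (μ.take i).sum + (y.val - (ν.take j).sum) < n := by
      have := sum_take_le μ (i+1)
      rw [← hsize] at hsuccμ
      omega
    set xt : Fin n := ⟨(μ.take i).sum + (y.val - (ν.take j).sum), hxtlt⟩ with hxt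
    have hxtblk : InBlock μ i xt.val := by
      refine ⟨Nat.le_add_right _ _, ?_⟩
      rw [← hsize] at hsuccμ
      simp [hxt]; omega
    have hwxt : w xt = y := by
      have h1 := hform xt hxtblk
      apply Fin.ext
      rw [h1]
      simp [hxt]
      have := hy.1
      omega
    have : w⁻¹ y = xt := by rw [← hwxt]; exact w.symm_apply_apply xt
    rw [this]; exact hxtblk
  refine ⟨i, hi, hsize.symm ▸ rfl, hmain, ?_⟩
  · intro x y hx hy hxy
    rcases lt_trichotomy (w⁻¹ x) (w⁻¹ y) with h | h | h
    · exact h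
    · exfalso
      have : x = y := by
        have := congrArg w (congrArg id h)
        simpa using this
      exact absurd this (ne_of_lt hxy)
    · exfalso
      have := hmono _ _ (hmain y hy) (hmain x hx) h
      simp at this
      exact absurd hxy (not_lt_of_gt this)

lemma perm_get_equiv : ∀ {l₁ l₂ : List ℕ}, l₁.Perm l₂ →
    ∃ σ : Fin l₁.length ≃ Fin l₂.length, ∀ i : Fin l₁.length, l₂.get (σ i) = l₁.get i := by
  intro l₁ l₂ p
  induction p with
  | nil => exact ⟨Equiv.refl _, fun i => rfl⟩
  | @cons a t₁ t₂ p ih =>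
    obtain ⟨σ, hσ⟩ := ih
    refine ⟨(finSuccEquiv _).trans ((Equiv.optionCongr σ).trans (finSuccEquiv _).symm), fun i => ?_⟩
    rcases i with ⟨i, hi⟩
    cases i with
    | zero =>
      simp [finSuccEquiv_zero]
    | succ k =>
      have hk : k < t₁.length := Nat.lt_of_succ_lt_succ hi
      have e1 : (⟨k+1, hi⟩ : Fin (a :: t₁).length) = Fin.succ ⟨k, hk⟩ := rfl
      rw [e1]
      simp only [Equiv.trans_apply, finSuccEquiv_succ, Equiv.optionCongr_apply,
        Option.map_some, finSuccEquiv_symm_some]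
      exact hσ _
  | swap a b l =>
    refine ⟨Equiv.swap ⟨0, by simp⟩ ⟨1, by simp⟩, fun i => ?_⟩
    rcases i with ⟨i, hi⟩
    match i, hi with
    | 0, hi =>
      simp [Equiv.swap_apply_def, Fin.ext_iff]
    | 1, hi =>
      simp [Equiv.swap_apply_def, Fin.ext_iff]
    | (k+2), hi =>
      simp [Equiv.swap_apply_def, Fin.ext_iff]
  | trans p₁ p₂ ih₁ ih₂ =>
    obtain ⟨σ₁, h₁⟩ := ih₁
    obtain ⟨σ₂, h₂⟩ := ih₂
    exact ⟨σ₁.trans σ₂, fun i => by rw [Equiv.trans_apply, h₂, h₁]⟩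

lemma exists_bom {n : ℕ} {μ ν : List ℕ} (hμsum : μ.sum = n) (hνsum : ν.sum = n)
    (σ : Fin μ.length ≃ Fin ν.length) (hσ : ∀ i : Fin μ.length, ν.get (σ i) = μ.get i) :
    ∃ w : Equiv.Perm (Fin n), BlockOrderMap n μ ν w := by
  have hσ' : ∀ j : Fin ν.length, μ.get (σ.symm j) = ν.get j := by
    intro j
    have := hσ (σ.symm j)
    rw [Equiv.apply_symm_apply] at this
    exact this.symm
  have Hμ : ∀ x : Fin n, ∃ i, i < μ.length ∧ InBlock μ i x.val :=
    fun x => inBlock_exists (by rw [hμsum]; exact x.isLt)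
  have Hν : ∀ y : Fin n, ∃ j, j < ν.length ∧ InBlock ν j y.val :=
    fun y => inBlock_exists (by rw [hνsum]; exact y.isLt)
  choose bi hbilt hbiblk using Hμ
  choose bj hbjlt hbjblk using Hν
  -- basic block facts
  have hsucc : ∀ i (hi : i < μ.length), (μ.take (i+1)).sum = (μ.take i).sum + μ[i] :=
    fun i hi => List.sum_take_succ μ i hi
  have hsuccν : ∀ j (hj : j < ν.length), (ν.take (j+1)).sum = (ν.take j).sum + ν[j] :=
    fun j hj => List.sum_take_succ ν j hj
  set fval : Fin n → ℕ :=
    fun x => (ν.take (σ ⟨bi x, hbilt x⟩).val).sum + (x.val - (μ.take (bi x)).sum) with hfval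
  set gval : Fin n → ℕ :=
    fun y => (μ.take (σ.symm ⟨bj y, hbjlt y⟩).val).sum + (y.val - (ν.take (bj y)).sum) with hgval
  have hfblk : ∀ x : Fin n, InBlock ν (σ ⟨bi x, hbilt x⟩).val (fval x) := by
    intro x
    obtain ⟨h1, h2⟩ := hbiblk x
    have hs := hsucc (bi x) (hbilt x)
    have hjlt := (σ ⟨bi x, hbilt x⟩).isLt
    have hsz : ν[(σ ⟨bi x, hbilt x⟩).val] = μ[bi x]'(hbilt x) := hσ ⟨bi x, hbilt x⟩
    have hsν := hsuccν _ hjlt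
    exact ⟨Nat.le_add_right _ _, by simp only [hfval]; omega⟩
  have hgblk : ∀ y : Fin n, InBlock μ (σ.symm ⟨bj y, hbjlt y⟩).val (gval y) := by
    intro y
    obtain ⟨h1, h2⟩ := hbjblk y
    have hs := hsuccν (bj y) (hbjlt y)
    have hilt := (σ.symm ⟨bj y, hbjlt y⟩).isLt
    have hsz : μ[(σ.symm ⟨bj y, hbjlt y⟩).val] = ν[bj y]'(hbjlt y) := hσ' ⟨bj y, hbjlt y⟩
    have hsμ := hsucc _ hilt
    exact ⟨Nat.le_add_right _ _, by simp only [hgval]; omega⟩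
  have hfl : ∀ x : Fin n, fval x < n := by
    intro x
    have := (hfblk x).2
    have := sum_take_le ν ((σ ⟨bi x, hbilt x⟩).val + 1)
    omega
  have hgl : ∀ y : Fin n, gval y < n := by
    intro y
    have := (hgblk y).2
    have := sum_take_le μ ((σ.symm ⟨bj y, hbjlt y⟩).val + 1)
    omega
  set f : Fin n → Fin n := fun x => ⟨fval x, hfl x⟩ with hf
  set g : Fin n → Fin n := fun y => ⟨gval y, hgl y⟩ with hg
  have hgf : ∀ x, g (f x) = x := by
    intro x
    have hbjfx : bj (f x) = (σ ⟨bi x, hbilt x⟩).val :=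
      inBlock_unique (hbjblk (f x)) (hfblk x)
    have hfinj : (⟨bj (f x), hbjlt (f x)⟩ : Fin ν.length) = σ ⟨bi x, hbilt x⟩ :=
      Fin.ext hbjfx
    apply Fin.ext
    show gval (f x) = x.val
    rw [hgval]
    simp only
    rw [hfinj, Equiv.symm_apply_apply, hbjfx]
    show (μ.take (bi x)).sum + (fval x - (ν.take ((σ ⟨bi x, hbilt x⟩)).val).sum) = x.val
    have h1 := (hbiblk x).1
    rw [hfval]
    simp only
    omega
  have hfg : ∀ y, f (g y) = y := by
    intro y
    have hbigy : bi (g y) = (σ.symm ⟨bj y, hbjlt y⟩).val :=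
      inBlock_unique (hbiblk (g y)) (hgblk y)
    have hfinj : (⟨bi (g y), hbilt (g y)⟩ : Fin μ.length) = σ.symm ⟨bj y, hbjlt y⟩ :=
      Fin.ext hbigy
    apply Fin.ext
    show fval (g y) = y.val
    rw [hfval]
    simp only
    rw [hfinj, Equiv.apply_symm_apply, hbigy]
    show (ν.take (bj y)).sum + (gval y - (μ.take ((σ.symm ⟨bj y, hbjlt y⟩)).val).sum) = y.val
    have h1 := (hbjblk y).1
    rw [hgval]
    simp only
    omega
  refine ⟨⟨f, g, hgf, hfg⟩, ?_⟩
  intro i hi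
  refine ⟨(σ ⟨i, hi⟩).val, (σ ⟨i, hi⟩).isLt, ?_, ?_, ?_⟩
  · rw [List.getD_eq_getElem ν 0 (σ ⟨i, hi⟩).isLt, List.getD_eq_getElem μ 0 hi]
    exact hσ ⟨i, hi⟩
  · intro x hx
    have hbix : bi x = i := inBlock_unique (hbiblk x) hx
    have := hfblk x
    show InBlock ν (σ ⟨i, hi⟩).val (fval x)
    have hfinj : (⟨bi x, hbilt x⟩ : Fin μ.length) = ⟨i, hi⟩ := Fin.ext hbix
    rwa [hfinj] at this
  · intro x y hx hy hxy
    have hbix : bi x = i := inBlock_unique (hbiblk x) hx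
    have hbiy : bi y = i := inBlock_unique (hbiblk y) hy
    show (⟨fval x, hfl x⟩ : Fin n) < ⟨fval y, hfl y⟩
    rw [Fin.lt_def]
    show fval x < fval y
    rw [hfval]
    simp only
    have e1 : (⟨bi x, hbilt x⟩ : Fin μ.length) = ⟨i, hi⟩ := Fin.ext hbix
    have e2 : (⟨bi y, hbilt y⟩ : Fin μ.length) = ⟨i, hi⟩ := Fin.ext hbiy
    rw [e1, e2, hbix, hbiy]
    have h1 := hx.1
    have h2 := hy.1
    rw [Fin.lt_def] at hxy
    omega

/-- If the compositions `μ` and `ν` of `n` have the same underlying partition, then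
there is a permutation `w` sending each block of `μ` onto a block of `ν` of the same
size preserving the order of the elements, and for every such `w` one has
`w·G_μ = G_ν·w` as subsets of `S_n` (composition is right to left, so `w·g = w * g`). -/
theorem stmt17 (n : ℕ) (μ ν : List ℕ)
    (hμpos : ∀ x ∈ μ, 0 < x) (hνpos : ∀ x ∈ ν, 0 < x)
    (hμsum : μ.sum = n) (hνsum : ν.sum = n)
    (hperm : (↑μ : Multiset ℕ) = (↑ν : Multiset ℕ)) :
    (∃ w : Equiv.Perm (Fin n), BlockOrderMap n μ ν w) ∧
    ∀ w : Equiv.Perm (Fin n), BlockOrderMap n μ ν w →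
      (fun g => w * g) '' {g : Equiv.Perm (Fin n) | BlockOrderMap n μ μ g} =
        (fun g => g * w) '' {g : Equiv.Perm (Fin n) | BlockOrderMap n ν ν g} := by
  constructor
  · obtain ⟨σ, hσ⟩ := perm_get_equiv (Multiset.coe_eq_coe.mp hperm)
    exact exists_bom hμsum hνsum σ hσ
  · intro w hw
    have hwinv := bom_inv hνpos hμsum hνsum hw
    ext h
    simp only [Set.mem_image, Set.mem_setOf_eq]
    constructor
    · rintro ⟨g, hg, rfl⟩
      refine ⟨w * g * w⁻¹, ?_, by group⟩
      have := bom_comp (bom_comp hwinv hg) hw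
      rwa [← mul_assoc] at this
    · rintro ⟨g', hg', rfl⟩
      refine ⟨w⁻¹ * g' * w, ?_, by group⟩
      have := bom_comp (bom_comp hw hg') hwinv
      rwa [← mul_assoc] at this
end
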